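/- arXiv:2306.00243 — 5 statements merged into one kernel-verified Lean document; each statement's English description precedes it below -/
import Mathlib

section
/- Let T be a tree on n ≥ 3 vertices and k ≥ 3 odd. Then the Steiner k-form p_T^{(k)}(x) = Σ_{v_1,...,v_k ∈ V(T)} d_T(v_1,...,v_k) x_{v_1}···x_{v_k} has a nontrivial common zero of all its partial derivatives. Explicitly, choosing a leaf u with neighbor w, and a vertex v ≠ u adjacent to w, the vector y with y_u = 1, y_v = ζ, y_w = −1−ζ (where ζ = exp(πi/(k−1))) and all other coordinates 0 satisfies D_z p_T(y) = 0 for every vertex z. -/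
open MvPolynomial Finset

/-- The Steiner distance of a set `S` of vertices of `G`: the minimum number of
edges of a connected subgraph of `G` containing `S`. -/
noncomputable def steinerDist {V : Type*} (G : SimpleGraph V) (S : Set V) : ℕ :=
  sInf {m | ∃ H : G.Subgraph, H.Connected ∧ S ⊆ H.verts ∧ H.edgeSet.ncard = m}

open scoped Classical

section Graph
variable {n : ℕ} {G : SimpleGraph (Fin n)}

lemma steinerDist_le {S : Set (Fin n)} (H : G.Subgraph) (hH : H.Connected)
    (hS : S ⊆ H.verts) {m : ℕ} (hm : H.edgeSet.ncard ≤ m) : steinerDist G S ≤ m :=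
  le_trans (Nat.sInf_le ⟨H, hH, hS, rfl⟩) hm

lemma le_steinerDist (hG : G.Connected) (S : Set (Fin n)) (m : ℕ)
    (h : ∀ H : G.Subgraph, H.Connected → S ⊆ H.verts → m ≤ H.edgeSet.ncard) :
    m ≤ steinerDist G S := by
  apply le_csInf
  · refine ⟨(⊤ : G.Subgraph).edgeSet.ncard, ⊤, ?_, by simp, rfl⟩
    rw [SimpleGraph.Subgraph.connected_iff']
    exact (SimpleGraph.Subgraph.topIso (G := G)).connected_iff.mpr hG
  · rintro b ⟨H, hH, hS, rfl⟩; exact h H hH hS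

lemma tree_path_length (hT : G.IsTree) {a b : Fin n} (Q : G.Walk a b) (hQ : Q.IsPath) :
    Q.length = G.dist a b := by
  obtain ⟨W, hW⟩ := hT.isConnected.exists_walk_length_eq_dist a b
  have h1 : Q = W.bypass := by
    have := hT.IsAcyclic.path_unique ⟨Q, hQ⟩ ⟨W.bypass, W.bypass_isPath⟩
    exact congrArg Subtype.val this
  refine le_antisymm ?_ (SimpleGraph.dist_le Q)
  rw [h1, ← hW]
  exact W.length_bypass_le

lemma tree_path_edges_mem (hT : G.IsTree) (H : G.Subgraph) (hH : H.Connected)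
    {a b : Fin n} (ha : a ∈ H.verts) (hb : b ∈ H.verts)
    (Q : G.Walk a b) (hQ : Q.IsPath) : ∀ e ∈ Q.edges, e ∈ H.edgeSet := by
  obtain ⟨W⟩ := hH.preconnected.coe ⟨a, ha⟩ ⟨b, hb⟩
  have hmap : (W.map H.hom).bypass.IsPath := SimpleGraph.Walk.bypass_isPath _
  have h1 : Q = (W.map H.hom).bypass := by
    have := hT.IsAcyclic.path_unique ⟨Q, hQ⟩ ⟨(W.map H.hom).bypass, hmap⟩
    exact congrArg Subtype.val this
  intro e he
  rw [h1] at he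
  have he2 := SimpleGraph.Walk.edges_bypass_subset _ he
  replace he2 : e ∈ W.edges.map (Sym2.map H.hom) := by
    rw [← SimpleGraph.Walk.edges_map]; exact he2
  obtain ⟨e₀, he₀, rfl⟩ := List.mem_map.mp he2
  have : e₀ ∈ H.coe.edgeSet := SimpleGraph.Walk.edges_subset_edgeSet W he₀
  induction e₀ with
  | h x y =>
    simp only [SimpleGraph.mem_edgeSet, SimpleGraph.Subgraph.coe_adj] at this
    exact this

lemma edges_card_le_ncard (H : G.Subgraph) {a b : Fin n} (Q : G.Walk a b) (hQ : Q.IsPath)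
    (h : ∀ e ∈ Q.edges, e ∈ H.edgeSet) : Q.length ≤ H.edgeSet.ncard := by
  have h1 : (↑Q.edges.toFinset : Set (Sym2 (Fin n))) ⊆ H.edgeSet := by
    intro e he
    simp only [Finset.coe_sort_coe, Finset.mem_coe, List.mem_toFinset] at he
    exact h e he
  have h2 := Set.ncard_le_ncard h1 (Set.toFinite _)
  rwa [Set.ncard_coe_finset, List.toFinset_card_of_nodup hQ.edges_nodup,
    Q.length_edges] at h2

lemma ncard_edgeSet_toSubgraph_le {a b : Fin n} (Q : G.Walk a b) :
    Q.toSubgraph.edgeSet.ncard ≤ Q.length := by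
  have h1 : Q.toSubgraph.edgeSet = ↑Q.edges.toFinset := by
    rw [SimpleGraph.Walk.edgeSet_toSubgraph]; ext e; simp
  rw [h1, Set.ncard_coe_finset]
  calc Q.edges.toFinset.card ≤ Q.edges.length := Q.edges.toFinset_card_le
    _ = Q.length := Q.length_edges

-- lower bound by distance of two members
lemma dist_le_steinerDist (hT : G.IsTree) {S : Set (Fin n)} {a b : Fin n}
    (ha : a ∈ S) (hb : b ∈ S) : G.dist a b ≤ steinerDist G S := by
  apply le_steinerDist hT.isConnected
  intro H hH hS
  obtain ⟨W, hW⟩ := hT.isConnected.exists_walk_length_eq_dist a b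
  have hQ : W.bypass.IsPath := W.bypass_isPath
  have hlen : W.bypass.length = G.dist a b := tree_path_length hT _ hQ
  rw [← hlen]
  exact edges_card_le_ncard H _ hQ
    (tree_path_edges_mem hT H hH (hS ha) (hS hb) _ hQ)

-- generic equality lemma
lemma steinerDist_eq_dist (hT : G.IsTree) {S : Set (Fin n)} {a b : Fin n}
    (ha : a ∈ S) (hb : b ∈ S) (H : G.Subgraph) (hH : H.Connected) (hS : S ⊆ H.verts)
    (hcard : H.edgeSet.ncard ≤ G.dist a b) : steinerDist G S = G.dist a b :=
  le_antisymm (steinerDist_le H hH hS hcard) (dist_le_steinerDist hT ha hb)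

lemma split_le_length {a b x : Fin n} (P : G.Walk a b) (hx : x ∈ P.support) :
    G.dist a x + G.dist x b ≤ P.length := by
  have hspec := P.take_spec hx
  have hlen : (P.takeUntil x hx).length + (P.dropUntil x hx).length = P.length := by
    rw [← SimpleGraph.Walk.length_append, hspec]
  calc G.dist a x + G.dist x b
      ≤ (P.takeUntil x hx).length + (P.dropUntil x hx).length :=
        Nat.add_le_add (SimpleGraph.dist_le _) (SimpleGraph.dist_le _)
    _ = P.length := hlen

lemma isPath_concat {a b c : Fin n} {Q : G.Walk a b} (hQ : Q.IsPath) (h : G.Adj b c)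
    (hc : c ∉ Q.support) : (Q.concat h).IsPath := by
  rw [SimpleGraph.Walk.isPath_def, SimpleGraph.Walk.support_concat]
  rw [List.nodup_append]
  refine ⟨hQ.support_nodup, List.nodup_singleton c, ?_⟩
  intro x hx x' hx'
  rw [List.mem_singleton] at hx'
  subst hx'
  exact fun h => hc (h ▸ hx)

lemma dist_leaf (hT : G.IsTree) {u w z : Fin n} (huw : G.Adj u w)
    (hleaf : ∀ x, G.Adj u x → x = w) (hz : z ≠ u) :
    G.dist z u = G.dist z w + 1 := by
  have h1 : G.dist z u ≤ G.dist z w + 1 := by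
    calc G.dist z u ≤ G.dist z w + G.dist w u := hT.isConnected.dist_triangle
      _ = G.dist z w + 1 := by rw [SimpleGraph.dist_eq_one_iff_adj.mpr huw.symm]
  obtain ⟨W, hW⟩ := hT.isConnected.exists_walk_length_eq_dist z u
  have h2 : G.dist z w + 1 ≤ G.dist z u := by
    have hWr : W.reverse.length = G.dist z u := by
      rw [SimpleGraph.Walk.length_reverse, hW]
    cases hWrev : W.reverse with
    | nil => exact absurd rfl hz
    | cons h' rest =>
      have hx := hleaf _ h'
      have : G.dist w z ≤ rest.length := hx ▸ SimpleGraph.dist_le rest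
      rw [hWrev, SimpleGraph.Walk.length_cons] at hWr
      rw [SimpleGraph.dist_comm] at this
      omega
  omega

lemma dist_trichotomy (hT : G.IsTree) {v w : Fin n} (hwv : G.Adj w v) (z : Fin n) :
    G.dist z v = G.dist z w + 1 ∨ G.dist z w = G.dist z v + 1 := by
  have hd1 : G.dist w v = 1 := SimpleGraph.dist_eq_one_iff_adj.mpr hwv
  have hd2 : G.dist v w = 1 := SimpleGraph.dist_eq_one_iff_adj.mpr hwv.symm
  have h1 : G.dist z v ≤ G.dist z w + 1 := by
    have := hT.isConnected.dist_triangle (u := z) (v := w) (w := v); omega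
  have h2 : G.dist z w ≤ G.dist z v + 1 := by
    have := hT.isConnected.dist_triangle (u := z) (v := v) (w := w); omega
  have hne : G.dist z v ≠ G.dist z w := by
    intro heq
    obtain ⟨Wp, hWp⟩ := hT.isConnected.exists_walk_length_eq_dist z w
    obtain ⟨Wq, hWq⟩ := hT.isConnected.exists_walk_length_eq_dist z v
    set P₀ := Wp.bypass with hP₀
    set Q₀ := Wq.bypass with hQ₀
    have hPp : P₀.IsPath := Wp.bypass_isPath
    have hQp : Q₀.IsPath := Wq.bypass_isPath
    have hPl : P₀.length = G.dist z w := tree_path_length hT P₀ hPp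
    have hQl : Q₀.length = G.dist z v := tree_path_length hT Q₀ hQp
    by_cases hv : v ∈ P₀.support
    · have := split_le_length P₀ hv
      rw [hPl] at this; omega
    by_cases hw : w ∈ Q₀.support
    · have := split_le_length Q₀ hw
      rw [hQl] at this; omega
    · have hR : (Q₀.concat hwv.symm).IsPath := isPath_concat hQp hwv.symm hw
      have := hT.IsAcyclic.path_unique ⟨P₀, hPp⟩ ⟨Q₀.concat hwv.symm, hR⟩
      have hlen : P₀.length = (Q₀.concat hwv.symm).length := by
        exact congrArg SimpleGraph.Walk.length (congrArg Subtype.val this)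
      rw [SimpleGraph.Walk.length_concat] at hlen
      omega
  omega

lemma aux1 {a b c d : Fin n} (Q : G.Walk a b) (h : G.Adj c d) (hc : c ∈ Q.support) :
    ∃ H : G.Subgraph, H.Connected ∧ H.edgeSet.ncard ≤ Q.length + 1 ∧
      {x | x ∈ Q.support} ∪ {c, d} ⊆ H.verts := by
  refine ⟨Q.toSubgraph ⊔ G.subgraphOfAdj h, ?_, ?_, ?_⟩
  · refine SimpleGraph.Subgraph.connected_sup Q.toSubgraph_connected.preconnected
      (SimpleGraph.Subgraph.subgraphOfAdj_connected h).preconnected ⟨c, ?_⟩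
    constructor
    · rw [SimpleGraph.Walk.mem_verts_toSubgraph]; exact hc
    · simp
  · rw [SimpleGraph.Subgraph.edgeSet_sup]
    calc (Q.toSubgraph.edgeSet ∪ (G.subgraphOfAdj h).edgeSet).ncard
        ≤ Q.toSubgraph.edgeSet.ncard + (G.subgraphOfAdj h).edgeSet.ncard :=
          Set.ncard_union_le _ _
      _ ≤ Q.length + 1 := by
          have h1 : (G.subgraphOfAdj h).edgeSet.ncard = 1 := by
            rw [SimpleGraph.edgeSet_subgraphOfAdj, Set.ncard_singleton]
          have h2 : Q.toSubgraph.edgeSet.ncard ≤ Q.length := by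
            have h1' : Q.toSubgraph.edgeSet = ↑Q.edges.toFinset := by
              rw [SimpleGraph.Walk.edgeSet_toSubgraph]; ext e; simp
            rw [h1', Set.ncard_coe_finset]
            calc Q.edges.toFinset.card ≤ Q.edges.length := Q.edges.toFinset_card_le
              _ = Q.length := Q.length_edges
          omega
  · rw [SimpleGraph.Subgraph.verts_sup, SimpleGraph.Walk.verts_toSubgraph]
    apply Set.union_subset_union (by rfl)
    simp

lemma aux2 {a b c d e f : Fin n} (Q : G.Walk a b) (h1 : G.Adj c d) (h2 : G.Adj e f)
    (hc : c ∈ Q.support) (he : e ∈ Q.support ∨ e = c ∨ e = d) :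
    ∃ H : G.Subgraph, H.Connected ∧ H.edgeSet.ncard ≤ Q.length + 2 ∧
      {x | x ∈ Q.support} ∪ {c, d} ∪ {e, f} ⊆ H.verts := by
  obtain ⟨H1, hH1c, hH1n, hH1v⟩ := aux1 Q h1 hc
  refine ⟨H1 ⊔ G.subgraphOfAdj h2, ?_, ?_, ?_⟩
  · refine SimpleGraph.Subgraph.connected_sup hH1c.preconnected
      (SimpleGraph.Subgraph.subgraphOfAdj_connected h2).preconnected ⟨e, ?_, by simp⟩
    apply hH1v
    rcases he with h | h | h
    · exact Or.inl h
    · exact Or.inr (by simp [h])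
    · exact Or.inr (by simp [h])
  · rw [SimpleGraph.Subgraph.edgeSet_sup]
    calc (H1.edgeSet ∪ (G.subgraphOfAdj h2).edgeSet).ncard
        ≤ H1.edgeSet.ncard + (G.subgraphOfAdj h2).edgeSet.ncard := Set.ncard_union_le _ _
      _ ≤ Q.length + 2 := by
          rw [SimpleGraph.edgeSet_subgraphOfAdj, Set.ncard_singleton]; omega
  · rw [SimpleGraph.Subgraph.verts_sup]
    apply Set.union_subset (Set.subset_union_of_subset_left hH1v _)
    apply Set.subset_union_of_subset_right
    simp

lemma le_ncard_of_subset {s : Finset (Sym2 (Fin n))} {t : Set (Sym2 (Fin n))}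
    (h : ↑s ⊆ t) : s.card ≤ t.ncard := by
  have := Set.ncard_le_ncard h (Set.toFinite _)
  rwa [Set.ncard_coe_finset] at this

lemma dist_uv (hT : G.IsTree) {u v w : Fin n} (huw : G.Adj u w)
    (hleaf : ∀ x, G.Adj u x → x = w) (hwv : G.Adj w v) (hvu : v ≠ u) :
    G.dist u v = 2 := by
  have hnadj : ¬ G.Adj u v := fun h => hwv.ne' ((hleaf v h) ▸ rfl)
  have h1 : G.dist u v ≤ 2 := by
    have : (SimpleGraph.Walk.cons huw (SimpleGraph.Walk.cons hwv SimpleGraph.Walk.nil)).length = 2 := rfl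
    exact this ▸ SimpleGraph.dist_le _
  have h2 : G.dist u v ≠ 1 := fun h => hnadj (SimpleGraph.dist_eq_one_iff_adj.mp h)
  have h3 : G.dist u v ≠ 0 := fun h => hvu.symm (hT.isConnected.dist_eq_zero_iff.mp h)
  omega

lemma sub_helper {B : Set (Fin n)} {u v w z : Fin n} (hB : B ⊆ {u,v,w}) {T : Set (Fin n)}
    (hz : z ∈ T) (hu : u ∈ B → u ∈ T) (hv : v ∈ B → v ∈ T) (hw : w ∈ B → w ∈ T) :
    {z} ∪ B ⊆ T := by
  intro x hx
  rcases hx with h | h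
  · rwa [Set.mem_singleton_iff.mp h]
  · rcases hB h with rfl | rfl | rfl
    · exact hu h
    · exact hv h
    · exact hw h

lemma lb_p2 (hT : G.IsTree) {u v w : Fin n} (huw : G.Adj u w)
    (hleaf : ∀ x, G.Adj u x → x = w) (hwv : G.Adj w v) (hvu : v ≠ u)
    {z : Fin n} (hz : z ≠ u) (hq : G.dist z v = G.dist z w + 1)
    {S : Set (Fin n)} (hzS : z ∈ S) (huS : u ∈ S) (hvS : v ∈ S) :
    G.dist z w + 2 ≤ steinerDist G S := by
  have hdzu : G.dist z u = G.dist z w + 1 := dist_leaf hT huw hleaf hz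
  have hdvw : G.dist v w = 1 := SimpleGraph.dist_eq_one_iff_adj.mpr hwv.symm
  have hduw : G.dist u w = 1 := SimpleGraph.dist_eq_one_iff_adj.mpr huw
  apply le_steinerDist hT.isConnected
  intro H hH hS
  obtain ⟨Wp, hWp⟩ := hT.isConnected.exists_walk_length_eq_dist z w
  have hPp : Wp.bypass.IsPath := Wp.bypass_isPath
  have hPl : Wp.bypass.length = G.dist z w := tree_path_length hT _ hPp
  have huP : u ∉ Wp.bypass.support := by
    intro h
    have := split_le_length Wp.bypass h
    rw [hPl] at this; omega
  have hvP : v ∉ Wp.bypass.support := by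
    intro h
    have := split_le_length Wp.bypass h
    rw [hPl] at this; omega
  have hR : (Wp.bypass.concat huw.symm).IsPath := isPath_concat hPp huw.symm huP
  have hRe : ∀ e ∈ (Wp.bypass.concat huw.symm).edges, e ∈ H.edgeSet :=
    tree_path_edges_mem hT H hH (hS hzS) (hS huS) _ hR
  have hR2 : (SimpleGraph.Walk.cons hwv.symm
      (SimpleGraph.Walk.cons huw.symm SimpleGraph.Walk.nil)).IsPath := by
    rw [SimpleGraph.Walk.isPath_def]
    simp [hwv.ne', hvu, huw.ne']
  have hvw_mem : s(v,w) ∈ H.edgeSet :=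
    tree_path_edges_mem hT H hH (hS hvS) (hS huS) _ hR2 s(v,w) (by simp)
  have hnotin : s(v,w) ∉ (Wp.bypass.concat huw.symm).edges := by
    intro hmem
    rw [SimpleGraph.Walk.edges_concat, List.concat_eq_append, List.mem_append] at hmem
    rcases hmem with h | h
    · exact hvP (SimpleGraph.Walk.fst_mem_support_of_mem_edges _ h)
    · rw [List.mem_singleton, Sym2.eq_iff] at h
      rcases h with ⟨h1, _⟩ | ⟨h1, _⟩
      · exact hwv.ne' h1
      · exact hvu h1
  have hsub : ↑(insert s(v,w) (Wp.bypass.concat huw.symm).edges.toFinset)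
      ⊆ H.edgeSet := by
    intro e he
    simp only [Finset.coe_insert, Set.mem_insert_iff, Finset.mem_coe,
      List.mem_toFinset] at he
    rcases he with rfl | he
    · exact hvw_mem
    · exact hRe e he
  have hcard : (insert s(v,w) (Wp.bypass.concat huw.symm).edges.toFinset).card
      = G.dist z w + 2 := by
    rw [Finset.card_insert_of_notMem (by rw [List.mem_toFinset]; exact hnotin),
      List.toFinset_card_of_nodup hR.edges_nodup, SimpleGraph.Walk.length_edges,
      SimpleGraph.Walk.length_concat, hPl]
  rw [← hcard]
  exact le_ncard_of_subset hsub

lemma steiner_case_A (hT : G.IsTree) {u v w : Fin n} (huw : G.Adj u w)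
    (hleaf : ∀ x, G.Adj u x → x = w) (hwv : G.Adj w v) (hvu : v ≠ u)
    {z : Fin n} (hz : z ≠ u) (hq : G.dist z v = G.dist z w + 1)
    {B : Set (Fin n)} (hB : B ⊆ {u, v, w}) (hBne : B.Nonempty) :
    steinerDist G ({z} ∪ B) =
      G.dist z w + ((if u ∈ B then 1 else 0) + (if v ∈ B then 1 else 0)) := by
  have hdzu := dist_leaf hT huw hleaf hz
  obtain ⟨Wp, hWp⟩ := hT.isConnected.exists_walk_length_eq_dist z w
  have hPp : Wp.bypass.IsPath := Wp.bypass_isPath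
  have hPl : Wp.bypass.length = G.dist z w := tree_path_length hT _ hPp
  have hwP : w ∈ Wp.bypass.support := Wp.bypass.end_mem_support
  have hzP : z ∈ Wp.bypass.support := Wp.bypass.start_mem_support
  have hzS : z ∈ {z} ∪ B := Set.mem_union_left B rfl
  by_cases hu : u ∈ B <;> by_cases hv : v ∈ B
  · simp only [if_pos hu, if_pos hv]
    obtain ⟨H, hHc, hHn, hHv⟩ := aux2 Wp.bypass huw.symm hwv hwP (Or.inl hwP)
    rw [hPl] at hHn
    have h1 : steinerDist G ({z} ∪ B) ≤ G.dist z w + 2 :=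
      steinerDist_le H hHc (sub_helper hB (hHv (by simp [hzP])) (fun _ => hHv (by simp))
        (fun _ => hHv (by simp)) (fun _ => hHv (by simp))) hHn
    have h2 := lb_p2 hT huw hleaf hwv hvu hz hq hzS (Set.mem_union_right _ hu)
      (Set.mem_union_right _ hv)
    omega
  · simp only [if_pos hu, if_neg hv]
    obtain ⟨H, hHc, hHn, hHv⟩ := aux1 Wp.bypass huw.symm hwP
    rw [hPl] at hHn
    have h1 : steinerDist G ({z} ∪ B) ≤ G.dist z w + 1 :=
      steinerDist_le H hHc (sub_helper hB (hHv (by simp [hzP])) (fun _ => hHv (by simp))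
        (fun hvB => absurd hvB hv) (fun _ => hHv (by simp))) hHn
    have h2 := dist_le_steinerDist hT (a := z) (b := u) hzS (Set.mem_union_right _ hu)
    omega
  · simp only [if_neg hu, if_pos hv]
    obtain ⟨H, hHc, hHn, hHv⟩ := aux1 Wp.bypass hwv hwP
    rw [hPl] at hHn
    have h1 : steinerDist G ({z} ∪ B) ≤ G.dist z w + 1 :=
      steinerDist_le H hHc (sub_helper hB (hHv (by simp [hzP])) (fun huB => absurd huB hu)
        (fun _ => hHv (by simp)) (fun _ => hHv (by simp))) hHn
    have h2 := dist_le_steinerDist hT (a := z) (b := v) hzS (Set.mem_union_right _ hv)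
    omega
  · simp only [if_neg hu, if_neg hv]
    have hw : w ∈ B := by
      obtain ⟨x, hx⟩ := hBne
      rcases hB hx with rfl | rfl | rfl
      · exact absurd hx hu
      · exact absurd hx hv
      · exact hx
    have h1 : steinerDist G ({z} ∪ B) ≤ G.dist z w :=
      steinerDist_le Wp.bypass.toSubgraph Wp.bypass.toSubgraph_connected
        (sub_helper hB (by rwa [SimpleGraph.Walk.mem_verts_toSubgraph])
          (fun huB => absurd huB hu) (fun hvB => absurd hvB hv)
          (fun _ => by rwa [SimpleGraph.Walk.mem_verts_toSubgraph]))
        (hPl ▸ ncard_edgeSet_toSubgraph_le Wp.bypass)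
    have h2 := dist_le_steinerDist hT (a := z) (b := w) hzS (Set.mem_union_right _ hw)
    omega

lemma steiner_case_B (hT : G.IsTree) {u v w : Fin n} (huw : G.Adj u w)
    (hleaf : ∀ x, G.Adj u x → x = w) (hwv : G.Adj w v) (hvu : v ≠ u)
    {z : Fin n} (hz : z ≠ u) (hq : G.dist z w = G.dist z v + 1)
    {B : Set (Fin n)} (hB : B ⊆ {u, v, w}) (hBne : B.Nonempty) :
    steinerDist G ({z} ∪ B) =
      G.dist z v + ((if u ∈ B ∨ w ∈ B then 1 else 0) + (if u ∈ B then 1 else 0)) := by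
  have hdzu := dist_leaf hT huw hleaf hz
  obtain ⟨Wq, hWq⟩ := hT.isConnected.exists_walk_length_eq_dist z v
  have hQp : Wq.bypass.IsPath := Wq.bypass_isPath
  have hQl : Wq.bypass.length = G.dist z v := tree_path_length hT _ hQp
  have hvQ : v ∈ Wq.bypass.support := Wq.bypass.end_mem_support
  have hzQ : z ∈ Wq.bypass.support := Wq.bypass.start_mem_support
  have hzS : z ∈ {z} ∪ B := Set.mem_union_left B rfl
  by_cases hu : u ∈ B
  · simp only [if_pos hu, if_pos (Or.inl hu : u ∈ B ∨ w ∈ B)]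
    obtain ⟨H, hHc, hHn, hHv⟩ := aux2 Wq.bypass hwv.symm huw.symm hvQ (Or.inr (Or.inr rfl))
    rw [hQl] at hHn
    have h1 : steinerDist G ({z} ∪ B) ≤ G.dist z v + 2 :=
      steinerDist_le H hHc (sub_helper hB (hHv (by simp [hzQ])) (fun _ => hHv (by simp))
        (fun _ => hHv (by simp)) (fun _ => hHv (by simp))) hHn
    have h2 := dist_le_steinerDist hT (a := z) (b := u) hzS (Set.mem_union_right _ hu)
    omega
  · by_cases hw : w ∈ B
    · simp only [if_neg hu, if_pos (Or.inr hw : u ∈ B ∨ w ∈ B)]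
      obtain ⟨H, hHc, hHn, hHv⟩ := aux1 Wq.bypass hwv.symm hvQ
      rw [hQl] at hHn
      have h1 : steinerDist G ({z} ∪ B) ≤ G.dist z v + 1 :=
        steinerDist_le H hHc (sub_helper hB (hHv (by simp [hzQ]))
          (fun huB => absurd huB hu) (fun _ => hHv (by simp)) (fun _ => hHv (by simp))) hHn
      have h2 := dist_le_steinerDist hT (a := z) (b := w) hzS (Set.mem_union_right _ hw)
      omega
    · have hvB : v ∈ B := by
        obtain ⟨x, hx⟩ := hBne
        rcases hB hx with rfl | rfl | rfl
        · exact absurd hx hu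
        · exact hx
        · exact absurd hx hw
      simp only [if_neg hu, if_neg (by tauto : ¬ (u ∈ B ∨ w ∈ B))]
      have h1 : steinerDist G ({z} ∪ B) ≤ G.dist z v :=
        steinerDist_le Wq.bypass.toSubgraph Wq.bypass.toSubgraph_connected
          (sub_helper hB (by rwa [SimpleGraph.Walk.mem_verts_toSubgraph])
            (fun huB => absurd huB hu)
            (fun _ => by rwa [SimpleGraph.Walk.mem_verts_toSubgraph])
            (fun hwB => absurd hwB hw))
          (hQl ▸ ncard_edgeSet_toSubgraph_le Wq.bypass)
      have h2 := dist_le_steinerDist hT (a := z) (b := v) hzS (Set.mem_union_right _ hvB)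
      omega

lemma steiner_case_U (hT : G.IsTree) {u v w : Fin n} (huw : G.Adj u w)
    (hleaf : ∀ x, G.Adj u x → x = w) (hwv : G.Adj w v) (hvu : v ≠ u)
    {B : Set (Fin n)} (hB : B ⊆ {u, v, w}) :
    steinerDist G ({u} ∪ B) =
      (if v ∈ B ∨ w ∈ B then 1 else 0) + (if v ∈ B then 1 else 0) := by
  have hduw : G.dist u w = 1 := SimpleGraph.dist_eq_one_iff_adj.mpr huw
  have hduv : G.dist u v = 2 := dist_uv hT huw hleaf hwv hvu
  have huS : u ∈ {u} ∪ B := Set.mem_union_left B rfl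
  have hnil : u ∈ (SimpleGraph.Walk.nil : G.Walk u u).support := by simp
  by_cases hv : v ∈ B
  · simp only [if_pos hv, if_pos (Or.inl hv : v ∈ B ∨ w ∈ B)]
    obtain ⟨H, hHc, hHn, hHv⟩ := aux2 (SimpleGraph.Walk.nil : G.Walk u u) huw hwv hnil
      (Or.inr (Or.inr rfl))
    have h1 : steinerDist G ({u} ∪ B) ≤ 2 :=
      steinerDist_le H hHc (sub_helper hB (hHv (by simp)) (fun _ => hHv (by simp))
        (fun _ => hHv (by simp)) (fun _ => hHv (by simp))) (by simpa using hHn)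
    have h2 := dist_le_steinerDist hT (a := u) (b := v) huS (Set.mem_union_right _ hv)
    omega
  · by_cases hw : w ∈ B
    · simp only [if_neg hv, if_pos (Or.inr hw : v ∈ B ∨ w ∈ B)]
      obtain ⟨H, hHc, hHn, hHv⟩ := aux1 (SimpleGraph.Walk.nil : G.Walk u u) huw hnil
      have h1 : steinerDist G ({u} ∪ B) ≤ 1 :=
        steinerDist_le H hHc (sub_helper hB (hHv (by simp)) (fun _ => hHv (by simp))
          (fun hvB => absurd hvB hv) (fun _ => hHv (by simp))) (by simpa using hHn)
      have h2 := dist_le_steinerDist hT (a := u) (b := w) huS (Set.mem_union_right _ hw)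
      omega
    · simp only [if_neg hv, if_neg (by tauto : ¬ (v ∈ B ∨ w ∈ B))]
      have h1 : steinerDist G ({u} ∪ B) ≤ 0 :=
        steinerDist_le (G.singletonSubgraph u) SimpleGraph.Subgraph.singletonSubgraph_connected
          (sub_helper hB (by simp) (fun _ => by simp)
            (fun hvB => absurd hvB hv) (fun hwB => absurd hwB hw))
          (by rw [SimpleGraph.edgeSet_singletonSubgraph]; simp)
      omega

end Graph

/-- The Steiner 3-form of a graph on `Fin n`. -/
noncomputable def steinerForm3 {n : ℕ} (G : SimpleGraph (Fin n)) : MvPolynomial (Fin n) ℂ :=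
  ∑ i, ∑ j, ∑ k, MvPolynomial.C (steinerDist G {i, j, k} : ℂ) *
    MvPolynomial.X i * MvPolynomial.X j * MvPolynomial.X k

/-- The Steiner k-form of a graph on `Fin n`. -/
noncomputable def steinerFormK {n : ℕ} (G : SimpleGraph (Fin n)) (k : ℕ) :
    MvPolynomial (Fin n) ℂ :=
  ∑ f : Fin k → Fin n, MvPolynomial.C (steinerDist G (Set.range f) : ℂ) *
    ∏ j, MvPolynomial.X (f j)

noncomputable def sPoly (n : ℕ) : MvPolynomial (Fin n) ℂ := ∑ r, MvPolynomial.X r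

noncomputable def gPoly {n : ℕ} (G : SimpleGraph (Fin n)) : MvPolynomial (Fin n) ℂ :=
  3 * ∑ i, ∑ j, if i < j then
    MvPolynomial.C (G.dist i j : ℂ) * MvPolynomial.X i * MvPolynomial.X j else 0

section Alg
variable {n : ℕ}

lemma pderiv_prod_X (z : Fin n) {k : ℕ} (f : Fin k → Fin n) (s : Finset (Fin k)) :
    pderiv z (∏ j ∈ s, (X (f j) : MvPolynomial (Fin n) ℂ)) =
      ∑ j ∈ s, if f j = z then ∏ i ∈ s.erase j, (X (f i) : MvPolynomial (Fin n) ℂ) else 0 := by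
  induction s using Finset.induction_on with
  | empty => simp
  | insert a s ha ih =>
    rw [Finset.prod_insert ha, pderiv_mul, ih, Finset.sum_insert ha]
    congr 1
    · rw [Finset.erase_insert ha, pderiv_X, Pi.single_apply]
      by_cases h : f a = z
      · rw [if_pos h, if_pos h, one_mul]
      · rw [if_neg h, if_neg h, zero_mul]
    · rw [Finset.mul_sum]
      apply Finset.sum_congr rfl
      intro j hj
      have hja : j ≠ a := fun h => ha (h ▸ hj)
      rw [Finset.erase_insert_of_ne hja.symm, Finset.prod_insert (fun h => ha (Finset.erase_subset _ _ h))]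
      by_cases h : f j = z
      · rw [if_pos h, if_pos h]
      · rw [if_neg h, if_neg h, mul_zero]

lemma eval_pderiv_term (y : Fin n → ℂ) (z : Fin n) {k : ℕ} (f : Fin k → Fin n) (c : ℂ) :
    eval y (pderiv z (C c * ∏ j, (X (f j) : MvPolynomial (Fin n) ℂ))) =
      c * ∑ j : Fin k, (if f j = z then ∏ i ∈ univ.erase j, y (f i) else 0) := by
  rw [pderiv_C_mul, pderiv_prod_X, map_mul, eval_C, map_sum]
  congr 1
  apply Finset.sum_congr rfl
  intro j _
  by_cases h : f j = z
  · rw [if_pos h, if_pos h, map_prod]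
    simp
  · rw [if_neg h, if_neg h, map_zero]

lemma base_sum {J : Type*} [DecidableEq J] [Fintype J] (t : Fin n → ℂ) :
    ∑ g : J → Fin n, ∏ i, t (g i) = (∑ x, t x) ^ (Fintype.card J) := by
  rw [← Fintype.prod_sum (fun (_ : J) (x : Fin n) => t x), Finset.prod_const, Finset.card_univ]

lemma ind_sum {J : Type*} [DecidableEq J] [Fintype J] (y : Fin n → ℂ) (P : Fin n → Prop) [DecidablePred P] :
    ∑ g : J → Fin n, (if ∃ i, P (g i) then (1:ℂ) else 0) * ∏ i, y (g i)
      = (∑ x, y x) ^ (Fintype.card J)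
        - (∑ x, if P x then 0 else y x) ^ (Fintype.card J) := by
  rw [← base_sum, ← base_sum, ← Finset.sum_sub_distrib]
  apply Finset.sum_congr rfl
  intro g _
  by_cases h : ∃ i, P (g i)
  · obtain ⟨i0, hi0⟩ := h
    have hz : ∏ i : J, (if P (g i) then (0:ℂ) else y (g i)) = 0 :=
      Finset.prod_eq_zero (Finset.mem_univ i0) (if_pos hi0)
    rw [if_pos ⟨i0, hi0⟩, one_mul, hz, sub_zero]
  · push_neg at h
    rw [if_neg (by push_neg; exact h), zero_mul]
    rw [Finset.prod_congr rfl (fun i _ => (if_neg (h i)))]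
    rw [sub_self]

lemma sum3 {u v w : Fin n} (huv : u ≠ v) (huw : u ≠ w) (hvw : v ≠ w)
    {a1 a2 a3 : ℂ} (t : Fin n → ℂ) (hu : t u = a1) (hv : t v = a2) (hw : t w = a3)
    (h0 : ∀ x, x ≠ u → x ≠ v → x ≠ w → t x = 0) : ∑ x, t x = a1 + a2 + a3 := by
  have h1 : ∑ x, t x = ∑ x ∈ ({u, v, w} : Finset (Fin n)), t x := by
    symm
    apply Finset.sum_subset (Finset.subset_univ _)
    intro x _ hx
    simp only [Finset.mem_insert, Finset.mem_singleton] at hx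
    push_neg at hx
    exact h0 x hx.1 hx.2.1 hx.2.2
  rw [h1, Finset.sum_insert (by simp [huv, huw]),
    Finset.sum_insert (by simp [hvw]), Finset.sum_singleton, hu, hv, hw, add_assoc]

set_option maxHeartbeats 1000000 in
lemma core_sum {k : ℕ} (hk : 3 ≤ k) (hodd : Odd k)
    {G : SimpleGraph (Fin n)} (hT : G.IsTree)
    {u v w : Fin n} (huw : G.Adj u w) (hleaf : ∀ x, G.Adj u x → x = w)
    (hwv : G.Adj w v) (hvu : v ≠ u)
    (y : Fin n → ℂ) (ζ : ℂ) (hyu : y u = 1) (hyv : y v = ζ) (hyw : y w = -1 - ζ)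
    (hy0 : ∀ x, x ≠ u → x ≠ v → x ≠ w → y x = 0)
    (hζ : ζ ^ (k - 1) = -1)
    (z : Fin n) {J : Type} [DecidableEq J] [Fintype J] [Nonempty J] (hcard : Fintype.card J = k - 1) :
    ∑ g : J → Fin n, (steinerDist G ({z} ∪ Set.range g) : ℂ) * ∏ i, y (g i) = 0 := by
  have huv : u ≠ v := fun h => hvu h.symm
  have hunw : u ≠ w := huw.ne
  have hvw : v ≠ w := hwv.ne'
  have hwu : w ≠ u := fun h => hunw h.symm
  have hceven : Even (k - 1) := by
    rcases hodd with ⟨m, hm⟩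
    exact ⟨m, by omega⟩
  have hcpos : k - 1 ≠ 0 := by omega
  have hS0 : (∑ x, y x) = 0 := by
    rw [sum3 huv hunw hvw y hyu hyv hyw hy0]; ring
  have hpow0 : (∑ x, y x) ^ (Fintype.card J) = 0 := by
    rw [hS0, hcard, zero_pow hcpos]
  have hAu : (∑ x, if x = u then 0 else y x) ^ (Fintype.card J) = 1 := by
    have h1 : (∑ x, if x = u then 0 else y x) = -1 := by
      rw [sum3 huv hunw hvw _ (if_pos rfl)
        (by rw [if_neg (fun h => hvu h), hyv])
        (by rw [if_neg hwu, hyw])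
        (fun x hu _ _ => by rw [if_neg hu]; exact hy0 x hu ‹_› ‹_›)]
      ring
    rw [h1, hcard, hceven.neg_one_pow]
  have hAv : (∑ x, if x = v then 0 else y x) ^ (Fintype.card J) = -1 := by
    have h1 : (∑ x, if x = v then 0 else y x) = -ζ := by
      rw [sum3 huv hunw hvw _ (by rw [if_neg huv, hyu]) (if_pos rfl)
        (by rw [if_neg (fun h => hvw h.symm), hyw])
        (fun x _ hv _ => by rw [if_neg hv]; exact hy0 x ‹_› hv ‹_›)]
      ring
    rw [h1, hcard, hceven.neg_pow, hζ]
  have hAuw : (∑ x, if x = u ∨ x = w then 0 else y x) ^ (Fintype.card J) = -1 := by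
    have h1 : (∑ x, if x = u ∨ x = w then 0 else y x) = ζ := by
      rw [sum3 huv hunw hvw _ (if_pos (Or.inl rfl))
        (by rw [if_neg (by push_neg; exact ⟨fun h => hvu h, hvw⟩), hyv])
        (if_pos (Or.inr rfl))
        (fun x hu _ hw => by
          rw [if_neg (by push_neg; exact ⟨hu, hw⟩)]; exact hy0 x hu ‹_› hw)]
      ring
    rw [h1, hcard, hζ]
  have hAvw : (∑ x, if x = v ∨ x = w then 0 else y x) ^ (Fintype.card J) = 1 := by
    have h1 : (∑ x, if x = v ∨ x = w then 0 else y x) = 1 := by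
      rw [sum3 huv hunw hvw _
        (by rw [if_neg (by push_neg; exact ⟨huv, hunw⟩), hyu])
        (if_pos (Or.inl rfl)) (if_pos (Or.inr rfl))
        (fun x _ hv hw => by
          rw [if_neg (by push_neg; exact ⟨hv, hw⟩)]; exact hy0 x ‹_› hv hw)]
      ring
    rw [h1, one_pow]
  have hbad : ∀ g : J → Fin n, (¬ ∀ i, g i = u ∨ g i = v ∨ g i = w) →
      ∏ i, y (g i) = 0 := by
    intro g hg
    push_neg at hg
    obtain ⟨i0, h1, h2, h3⟩ := hg
    exact Finset.prod_eq_zero (Finset.mem_univ i0) (hy0 _ h1 h2 h3)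
  have hrange : ∀ g : J → Fin n, (∀ i, g i = u ∨ g i = v ∨ g i = w) →
      Set.range g ⊆ {u, v, w} := by
    rintro g hg x ⟨i, rfl⟩
    rcases hg i with h | h | h <;> simp [h]
  by_cases hz : z = u
  · subst hz
    have hcong : ∀ g : J → Fin n,
        (steinerDist G ({z} ∪ Set.range g) : ℂ) * ∏ i, y (g i) =
        ((if (∃ i, g i = v ∨ g i = w) then (1:ℂ) else 0)
          + (if ∃ i, g i = v then 1 else 0)) * ∏ i, y (g i) := by
      intro g
      by_cases hgood : ∀ i, g i = z ∨ g i = v ∨ g i = w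
      · rw [steiner_case_U hT huw hleaf hwv hvu (hrange g hgood)]
        simp only [Set.mem_range, ← exists_or, Nat.cast_add, Nat.cast_ite, Nat.cast_one, Nat.cast_zero]
      · rw [hbad g hgood, mul_zero, mul_zero]
    rw [Finset.sum_congr rfl (fun g _ => hcong g)]
    simp only [add_mul]
    rw [Finset.sum_add_distrib]
    have i1 : ∑ g : J → Fin n, (if (∃ i, g i = v ∨ g i = w) then (1:ℂ) else 0) * ∏ i, y (g i)
        = (∑ x, y x) ^ (Fintype.card J)
          - (∑ x, if x = v ∨ x = w then 0 else y x) ^ (Fintype.card J) :=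
      ind_sum (J := J) y (fun x => x = v ∨ x = w)
    have i2 : ∑ g : J → Fin n, (if (∃ i, g i = v) then (1:ℂ) else 0) * ∏ i, y (g i)
        = (∑ x, y x) ^ (Fintype.card J)
          - (∑ x, if x = v then 0 else y x) ^ (Fintype.card J) :=
      ind_sum (J := J) y (fun x => x = v)
    rw [i1, i2, hpow0, hAv, hAvw]
    ring
  · rcases dist_trichotomy hT hwv z with hq | hq
    · have hcong : ∀ g : J → Fin n,
          (steinerDist G ({z} ∪ Set.range g) : ℂ) * ∏ i, y (g i) =
          ((G.dist z w : ℂ) + ((if ∃ i, g i = u then (1:ℂ) else 0)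
            + (if ∃ i, g i = v then 1 else 0))) * ∏ i, y (g i) := by
        intro g
        by_cases hgood : ∀ i, g i = u ∨ g i = v ∨ g i = w
        · rw [steiner_case_A hT huw hleaf hwv hvu hz hq (hrange g hgood)
            (Set.range_nonempty g)]
          simp only [Set.mem_range, ← exists_or, Nat.cast_add, Nat.cast_ite, Nat.cast_one, Nat.cast_zero]
        · rw [hbad g hgood, mul_zero, mul_zero]
      rw [Finset.sum_congr rfl (fun g _ => hcong g)]
      simp only [add_mul]
      rw [Finset.sum_add_distrib, Finset.sum_add_distrib]
      have i2 : ∑ g : J → Fin n, (if (∃ i, g i = u) then (1:ℂ) else 0) * ∏ i, y (g i)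
          = (∑ x, y x) ^ (Fintype.card J)
            - (∑ x, if x = u then 0 else y x) ^ (Fintype.card J) :=
        ind_sum (J := J) y (fun x => x = u)
      have i3 : ∑ g : J → Fin n, (if (∃ i, g i = v) then (1:ℂ) else 0) * ∏ i, y (g i)
          = (∑ x, y x) ^ (Fintype.card J)
            - (∑ x, if x = v then 0 else y x) ^ (Fintype.card J) :=
        ind_sum (J := J) y (fun x => x = v)
      rw [← Finset.mul_sum, base_sum, i2, i3, hAu, hAv]
      simp only [hpow0]
      ring
    · have hcong : ∀ g : J → Fin n,
          (steinerDist G ({z} ∪ Set.range g) : ℂ) * ∏ i, y (g i) =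
          ((G.dist z v : ℂ) + ((if (∃ i, g i = u ∨ g i = w) then (1:ℂ) else 0)
            + (if ∃ i, g i = u then 1 else 0))) * ∏ i, y (g i) := by
        intro g
        by_cases hgood : ∀ i, g i = u ∨ g i = v ∨ g i = w
        · rw [steiner_case_B hT huw hleaf hwv hvu hz hq (hrange g hgood)
            (Set.range_nonempty g)]
          simp only [Set.mem_range, ← exists_or, Nat.cast_add, Nat.cast_ite, Nat.cast_one, Nat.cast_zero]
        · rw [hbad g hgood, mul_zero, mul_zero]
      rw [Finset.sum_congr rfl (fun g _ => hcong g)]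
      simp only [add_mul]
      rw [Finset.sum_add_distrib, Finset.sum_add_distrib]
      have i1 : ∑ g : J → Fin n, (if (∃ i, g i = u ∨ g i = w) then (1:ℂ) else 0) * ∏ i, y (g i)
          = (∑ x, y x) ^ (Fintype.card J)
            - (∑ x, if x = u ∨ x = w then 0 else y x) ^ (Fintype.card J) :=
        ind_sum (J := J) y (fun x => x = u ∨ x = w)
      have i2 : ∑ g : J → Fin n, (if (∃ i, g i = u) then (1:ℂ) else 0) * ∏ i, y (g i)
          = (∑ x, y x) ^ (Fintype.card J)
            - (∑ x, if x = u then 0 else y x) ^ (Fintype.card J) :=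
        ind_sum (J := J) y (fun x => x = u)
      rw [← Finset.mul_sum, base_sum, i1, i2, hAu, hAuw]
      simp only [hpow0]
      ring

lemma range_splitAt {k : ℕ} (j : Fin k) (z : Fin n) (g : {i : Fin k // i ≠ j} → Fin n) :
    Set.range ((Equiv.funSplitAt j (Fin n)).symm (z, g)) = {z} ∪ Set.range g := by
  ext x
  simp only [Set.mem_range, Set.mem_union, Set.mem_singleton_iff,
    Equiv.funSplitAt_symm_apply]
  constructor
  · rintro ⟨i, hi⟩
    by_cases h : i = j
    · subst h
      rw [dif_pos rfl] at hi
      exact Or.inl hi.symm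
    · rw [dif_neg h] at hi
      exact Or.inr ⟨⟨i, h⟩, hi⟩
  · rintro (rfl | ⟨i, hi⟩)
    · exact ⟨j, by rw [dif_pos rfl]⟩
    · exact ⟨i.1, by rw [dif_neg i.2, Subtype.coe_eta]; exact hi⟩

lemma prod_erase_eq {k : ℕ} (j : Fin k) (t : Fin k → ℂ) :
    ∏ i ∈ univ.erase j, t i = ∏ i : {i : Fin k // i ≠ j}, t i :=
  Finset.prod_subtype _ (fun x => by simp) t

lemma card_ne {k : ℕ} (j : Fin k) : Fintype.card {i : Fin k // i ≠ j} = k - 1 := by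
  have h1 := Fintype.card_subtype_compl (fun i : Fin k => i = j)
  simp only [Fintype.card_subtype_eq, Fintype.card_fin] at h1
  exact h1

set_option maxHeartbeats 2000000 in
lemma main_deriv {k : ℕ} (hk : 3 ≤ k) (hodd : Odd k)
    {G : SimpleGraph (Fin n)} (hT : G.IsTree)
    {u v w : Fin n} (huw : G.Adj u w) (hleaf : ∀ x, G.Adj u x → x = w)
    (hwv : G.Adj w v) (hvu : v ≠ u)
    (y : Fin n → ℂ) (ζ : ℂ) (hyu : y u = 1) (hyv : y v = ζ) (hyw : y w = -1 - ζ)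
    (hy0 : ∀ x, x ≠ u → x ≠ v → x ≠ w → y x = 0)
    (hζ : ζ ^ (k - 1) = -1) (z : Fin n) :
    eval y (pderiv z (steinerFormK G k)) = 0 := by
  rw [steinerFormK, map_sum, map_sum]
  rw [Finset.sum_congr rfl (fun f _ => eval_pderiv_term y z f _)]
  simp only [Finset.mul_sum]
  rw [Finset.sum_comm]
  apply Finset.sum_eq_zero
  intro j _
  rw [← Equiv.sum_comp ((Equiv.funSplitAt j (Fin n)).symm)]
  rw [Fintype.sum_prod_type]
  rw [Finset.sum_eq_single z]
  · have hJne : Nonempty {i : Fin k // i ≠ j} := by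
      rw [← Fintype.card_pos_iff, card_ne]
      omega
    have hstep : ∀ g : {i : Fin k // i ≠ j} → Fin n,
        (steinerDist G (Set.range ((Equiv.funSplitAt j (Fin n)).symm (z, g))) : ℂ) *
          (if ((Equiv.funSplitAt j (Fin n)).symm (z, g)) j = z then
            ∏ i ∈ univ.erase j, y (((Equiv.funSplitAt j (Fin n)).symm (z, g)) i) else 0)
        = (steinerDist G ({z} ∪ Set.range g) : ℂ) * ∏ i, y (g i) := by
      intro g
      rw [range_splitAt]
      rw [if_pos (by rw [Equiv.funSplitAt_symm_apply, dif_pos rfl])]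
      congr 1
      rw [prod_erase_eq]
      apply Finset.prod_congr rfl
      intro i _
      rw [Equiv.funSplitAt_symm_apply, dif_neg i.2, Subtype.coe_eta]
    rw [Finset.sum_congr rfl (fun g _ => hstep g)]
    exact core_sum hk hodd hT huw hleaf hwv hvu y ζ hyu hyv hyw hy0 hζ z (card_ne j)
  · intro x _ hx
    apply Finset.sum_eq_zero
    intro g _
    rw [if_neg (by rw [Equiv.funSplitAt_symm_apply, dif_pos rfl]; exact hx), mul_zero]
  · intro h
    exact absurd (Finset.mem_univ z) h

end Alg

theorem stmt4 {n k : ℕ} (hn : 3 ≤ n) (hk : 3 ≤ k) (hodd : Odd k)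
    (G : SimpleGraph (Fin n)) (hT : G.IsTree)
    (u v w : Fin n) (huw : G.Adj u w) (hleaf : ∀ z, G.Adj u z → z = w)
    (hwv : G.Adj w v) (hvu : v ≠ u)
    (y : Fin n → ℂ)
    (hy : y = fun z => if z = u then 1
      else if z = v then Complex.exp (Real.pi * Complex.I / (k - 1))
      else if z = w then -1 - Complex.exp (Real.pi * Complex.I / (k - 1)) else 0) :
    y ≠ 0 ∧ ∀ z : Fin n,
      MvPolynomial.eval y (MvPolynomial.pderiv z (steinerFormK G k)) = 0 := by
  have hwu : w ≠ u := huw.ne'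
  have hyu : y u = 1 := by rw [hy]; simp
  have hyv : y v = Complex.exp (Real.pi * Complex.I / (k - 1)) := by rw [hy]; simp [hvu]
  have hyw : y w = -1 - Complex.exp (Real.pi * Complex.I / (k - 1)) := by
    rw [hy]; simp [hwu, hwv.ne]
  have hy0 : ∀ x, x ≠ u → x ≠ v → x ≠ w → y x = 0 := fun x h1 h2 h3 => by
    rw [hy]; simp [h1, h2, h3]
  have hζ : Complex.exp (Real.pi * Complex.I / (k - 1)) ^ (k - 1) = -1 := by
    rw [← Complex.exp_nat_mul]
    have hne : ((k : ℂ) - 1) ≠ 0 := by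
      have h1 : (k : ℂ) ≠ 1 := by
        exact_mod_cast (by omega : k ≠ 1)
      exact sub_ne_zero.mpr h1
    have hcast : ((k - 1 : ℕ) : ℂ) = (k : ℂ) - 1 := by
      have h1 : 1 ≤ k := by omega
      push_cast [h1]
      ring
    rw [hcast, show ((k : ℂ) - 1) * (Real.pi * Complex.I / ((k : ℂ) - 1))
      = Real.pi * Complex.I from by field_simp]
    exact Complex.exp_pi_mul_I
  refine ⟨?_, ?_⟩
  · intro h0
    have h1 : y u = 0 := by rw [h0]; rfl
    rw [hyu] at h1
    exact one_ne_zero h1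
  · intro z
    exact main_deriv hk hodd hT huw hleaf hwv hvu y _ hyu hyv hyw hy0 hζ z
end

section
/- Let T be a tree on n vertices. The Steiner 3-form p = p_T^{(3)} factors as p = s·g, where s = Σ_r x_r and g = 3 Σ_{i<j} d_T(i,j) x_i x_j. In particular, s divides p in ℂ[x_1,...,x_n]. -/
open MvPolynomial Finset

section AuxSteiner

open SimpleGraph

variable {V : Type*} {G : SimpleGraph V}


lemma path_length_eq_dist (hT : G.IsTree) {a b : V} (p : G.Walk a b) (hp : p.IsPath) :
    p.length = G.dist a b := by
  obtain ⟨q, hq, hql⟩ := (hT.isConnected a b).exists_path_of_dist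
  have : (⟨p, hp⟩ : G.Path a b) = ⟨q, hq⟩ := hT.IsAcyclic.path_unique _ _
  rw [Subtype.ext_iff] at this
  simp only at this
  rw [this, hql]

lemma mem_path_edges_iff (hT : G.IsTree) {a b : V} (p : G.Walk a b) (hp : p.IsPath)
    (e : Sym2 V) :
    e ∈ p.edges ↔ ¬ (G \ fromEdgeSet {e}).Reachable a b := by
  classical
  constructor
  · rintro hmem ⟨w⟩
    set w' := w.map (Hom.ofLE (sdiff_le : G \ fromEdgeSet {e} ≤ G)) with hw'
    have hnot : e ∉ w'.edges := by
      simp_rw [hw', Walk.edges_map, List.mem_map, Hom.coe_ofLE, Sym2.map_id,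
        id]
      rintro ⟨e', h', rfl⟩
      simpa using w.edges_subset_edgeSet h'
    have hbp : w'.bypass.IsPath := w'.bypass_isPath
    have heq : w'.bypass = p := by
      have := hT.IsAcyclic.path_unique ⟨w'.bypass, hbp⟩ ⟨p, hp⟩
      exact congrArg Subtype.val this
    rw [← heq] at hmem
    exact hnot (Walk.edges_bypass_subset _ hmem)
  · intro hnr
    by_contra hmem
    exact hnr ⟨p.toDeleteEdges {e}
      (fun e' he' => by simp only [Set.mem_singleton_iff]; rintro rfl; exact hmem he')⟩

lemma side_step {s1 s2 : V} : ∀ {a x : V} (_ : G.Walk a x),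
    ((G \ fromEdgeSet {s(s1, s2)}).Reachable s1 a ∨ (G \ fromEdgeSet {s(s1, s2)}).Reachable s2 a) →
    ((G \ fromEdgeSet {s(s1, s2)}).Reachable s1 x ∨
      (G \ fromEdgeSet {s(s1, s2)}).Reachable s2 x) := by
  intro a x w
  induction w with
  | nil => exact id
  | @cons a c x h p ih =>
    intro hav
    apply ih
    by_cases he : s(a, c) = s(s1, s2)
    · rw [Sym2.eq_iff] at he
      rcases he with ⟨rfl, rfl⟩ | ⟨rfl, rfl⟩
      · exact Or.inr (Reachable.refl _)
      · exact Or.inl (Reachable.refl _)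
    · have hadj : (G \ fromEdgeSet {s(s1, s2)}).Adj a c := by
        simp only [sdiff_adj, fromEdgeSet_adj, Set.mem_singleton_iff, not_and, not_not]
        exact ⟨h, fun hc => absurd hc he⟩
      rcases hav with h1 | h1
      · exact Or.inl (h1.trans hadj.reachable)
      · exact Or.inr (h1.trans hadj.reachable)

lemma side_total (hc : G.Connected) (s1 s2 : V) (x : V) :
    (G \ fromEdgeSet {s(s1, s2)}).Reachable s1 x ∨
      (G \ fromEdgeSet {s(s1, s2)}).Reachable s2 x := by
  obtain ⟨w⟩ := hc s1 x
  exact side_step w (Or.inl (Reachable.refl _))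

lemma reach_iff_side (hc : G.Connected) {s1 s2 : V} (a b : V) :
    (G \ fromEdgeSet {s(s1, s2)}).Reachable a b ↔
      ((G \ fromEdgeSet {s(s1, s2)}).Reachable s1 a ↔
        (G \ fromEdgeSet {s(s1, s2)}).Reachable s1 b) := by
  constructor
  · intro hab
    exact ⟨fun h => h.trans hab, fun h => h.trans hab.symm⟩
  · intro hiff
    by_cases h1 : (G \ fromEdgeSet {s(s1, s2)}).Reachable s1 a
    · exact h1.symm.trans (hiff.mp h1)
    · have h2 : (G \ fromEdgeSet {s(s1, s2)}).Reachable s2 a :=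
        (side_total hc s1 s2 a).resolve_left h1
      have h1b : ¬ (G \ fromEdgeSet {s(s1, s2)}).Reachable s1 b := fun hb => h1 (hiff.mpr hb)
      have h2b : (G \ fromEdgeSet {s(s1, s2)}).Reachable s2 b :=
        (side_total hc s1 s2 b).resolve_left h1b
      exact h2.symm.trans h2b

open Classical in
lemma count_two (hT : G.IsTree) {i j k : V}
    (P : G.Walk i j) (Q : G.Walk j k) (R : G.Walk i k)
    (hP : P.IsPath) (hQ : Q.IsPath) (hR : R.IsPath)
    {e : Sym2 V} (he : e ∈ P.edges ∨ e ∈ Q.edges ∨ e ∈ R.edges) :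
    (if e ∈ P.edges then 1 else 0) + (if e ∈ Q.edges then 1 else 0)
      + (if e ∈ R.edges then 1 else 0) = 2 := by
  induction e using Sym2.ind with
  | _ u v =>
  have h1 := mem_path_edges_iff hT P hP s(u, v)
  have h2 := mem_path_edges_iff hT Q hQ s(u, v)
  have h3 := mem_path_edges_iff hT R hR s(u, v)
  rw [reach_iff_side hT.isConnected] at h1 h2 h3
  by_cases hA : (G \ fromEdgeSet {s(u, v)}).Reachable u i <;>
  by_cases hB : (G \ fromEdgeSet {s(u, v)}).Reachable u j <;>
  by_cases hC : (G \ fromEdgeSet {s(u, v)}).Reachable u k <;>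
    simp_all

lemma steiner_three [Fintype V] (hT : G.IsTree) (i j k : V) :
    2 * steinerDist G {i, j, k} = G.dist i j + G.dist j k + G.dist i k := by
  classical
  obtain ⟨P, hP, -⟩ := hT.existsUnique_path i j
  obtain ⟨Q, hQ, -⟩ := hT.existsUnique_path j k
  obtain ⟨R, hR, -⟩ := hT.existsUnique_path i k
  set E : Finset (Sym2 V) := P.edges.toFinset ∪ Q.edges.toFinset ∪ R.edges.toFinset with hE
  set H : G.Subgraph := P.toSubgraph ⊔ Q.toSubgraph ⊔ R.toSubgraph with hH
  have hHconn : H.Connected := by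
    apply Subgraph.connected_sup
    · exact (Subgraph.connected_sup P.toSubgraph_connected.preconnected Q.toSubgraph_connected.preconnected
        ⟨j, P.end_mem_verts_toSubgraph, Q.start_mem_verts_toSubgraph⟩).preconnected
    · exact R.toSubgraph_connected.preconnected
    · exact ⟨i, Or.inl P.start_mem_verts_toSubgraph, R.start_mem_verts_toSubgraph⟩
  have hHedge : H.edgeSet = ↑E := by
    ext e
    simp only [hH, hE, Subgraph.edgeSet_sup, Walk.edgeSet_toSubgraph, Set.mem_union, Walk.mem_edgeSet,
      Set.mem_setOf_eq, Finset.coe_union, List.coe_toFinset]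
  have hverts : ({i, j, k} : Set V) ⊆ H.verts := by
    intro x hx
    rcases hx with rfl | rfl | rfl
    · exact Or.inl (Or.inl P.start_mem_verts_toSubgraph)
    · exact Or.inl (Or.inl P.end_mem_verts_toSubgraph)
    · exact Or.inr R.end_mem_verts_toSubgraph
  have hmem : E.card ∈ {m | ∃ H' : G.Subgraph,
      H'.Connected ∧ ({i, j, k} : Set V) ⊆ H'.verts ∧ H'.edgeSet.ncard = m} :=
    ⟨H, hHconn, hverts, by rw [hHedge, Set.ncard_coe_finset]⟩
  have hle : ∀ m ∈ {m | ∃ H' : G.Subgraph,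
      H'.Connected ∧ ({i, j, k} : Set V) ⊆ H'.verts ∧ H'.edgeSet.ncard = m}, E.card ≤ m := by
    rintro m ⟨H', hc', hsub', rfl⟩
    have key : ∀ {a b : V} (p : G.Walk a b), p.IsPath → a ∈ H'.verts → b ∈ H'.verts →
        ∀ e ∈ p.edges, e ∈ H'.edgeSet := by
      intro a b p hp ha hb e hep
      obtain ⟨w, hw⟩ := ((Subgraph.connected_iff_forall_exists_walk_subgraph H').mp hc').2 ha hb
      have hew : e ∈ w.edges := by
        by_contra hne
        exact ((mem_path_edges_iff hT p hp e).mp hep)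
          ⟨w.toDeleteEdges {e}
            (fun e' he' => by simp only [Set.mem_singleton_iff]; rintro rfl; exact hne he')⟩
      exact Subgraph.edgeSet_mono hw (by rw [Walk.edgeSet_toSubgraph]; exact hew)
    have hEsub : ↑E ⊆ H'.edgeSet := by
      intro e he
      simp only [hE, coe_union, Set.mem_union, List.coe_toFinset, Set.mem_setOf_eq] at he
      have hi : i ∈ H'.verts := hsub' (by simp)
      have hj : j ∈ H'.verts := hsub' (by simp)
      have hk : k ∈ H'.verts := hsub' (by simp)
      rcases he with (h | h) | h
      · exact key P hP hi hj e h
      · exact key Q hQ hj hk e h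
      · exact key R hR hi hk e h
    calc E.card = (↑E : Set (Sym2 V)).ncard := (Set.ncard_coe_finset E).symm
      _ ≤ H'.edgeSet.ncard := Set.ncard_le_ncard hEsub (Set.toFinite _)
  have hsd : steinerDist G {i, j, k} = E.card :=
    le_antisymm (Nat.sInf_le hmem) (le_csInf ⟨_, hmem⟩ hle)
  have hPc : G.dist i j = P.edges.toFinset.card := by
    rw [List.toFinset_card_of_nodup hP.edges_nodup, Walk.length_edges,
      path_length_eq_dist hT P hP]
  have hQc : G.dist j k = Q.edges.toFinset.card := by
    rw [List.toFinset_card_of_nodup hQ.edges_nodup, Walk.length_edges,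
      path_length_eq_dist hT Q hQ]
  have hRc : G.dist i k = R.edges.toFinset.card := by
    rw [List.toFinset_card_of_nodup hR.edges_nodup, Walk.length_edges,
      path_length_eq_dist hT R hR]
  have hsum : ∀ A : Finset (Sym2 V), A ⊆ E → A.card = ∑ e ∈ E, (if e ∈ A then 1 else 0) := by
    intro A hA
    rw [Finset.sum_ite_mem, Finset.inter_eq_right.mpr hA, Finset.sum_const, smul_eq_mul,
      mul_one]
  rw [hsd, hPc, hQc, hRc]
  have hsubP : P.edges.toFinset ⊆ E := by
    intro e he; simp only [hE, Finset.mem_union]; exact Or.inl (Or.inl he)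
  have hsubQ : Q.edges.toFinset ⊆ E := by
    intro e he; simp only [hE, Finset.mem_union]; exact Or.inl (Or.inr he)
  have hsubR : R.edges.toFinset ⊆ E := by
    intro e he; simp only [hE, Finset.mem_union]; exact Or.inr he
  calc 2 * E.card = ∑ _e ∈ E, 2 := by
        rw [Finset.card_eq_sum_ones, Finset.mul_sum]; simp
    _ = ∑ e ∈ E, ((if e ∈ P.edges.toFinset then 1 else 0)
          + (if e ∈ Q.edges.toFinset then 1 else 0)
          + (if e ∈ R.edges.toFinset then 1 else 0)) := by
        refine Finset.sum_congr rfl fun e he => ?_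
        simp only [List.mem_toFinset]
        refine (count_two hT P Q R hP hQ hR ?_).symm
        have := Finset.mem_union.mp he
        rcases this with h | h
        · rcases Finset.mem_union.mp h with h' | h'
          · exact Or.inl (List.mem_toFinset.mp h')
          · exact Or.inr (Or.inl (List.mem_toFinset.mp h'))
        · exact Or.inr (Or.inr (List.mem_toFinset.mp h))
    _ = _ := by
        rw [Finset.sum_add_distrib, Finset.sum_add_distrib,
          ← hsum _ hsubP, ← hsum _ hsubQ, ← hsum _ hsubR]

end AuxSteiner

theorem stmt6 {n : ℕ} (G : SimpleGraph (Fin n)) (hT : G.IsTree) :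
    steinerForm3 G = sPoly n * gPoly G ∧ sPoly n ∣ steinerForm3 G := by
  classical
  set s : MvPolynomial (Fin n) ℂ := sPoly n with hs
  set F : MvPolynomial (Fin n) ℂ :=
    ∑ i, ∑ j, (G.dist i j : MvPolynomial (Fin n) ℂ) * X i * X j with hF
  set A : MvPolynomial (Fin n) ℂ :=
    ∑ i, ∑ j, if i < j then (G.dist i j : MvPolynomial (Fin n) ℂ) * X i * X j else 0 with hA
  have h2 : (2 : MvPolynomial (Fin n) ℂ) ≠ 0 := two_ne_zero
  have hlhs : (2 : MvPolynomial (Fin n) ℂ) * steinerForm3 G = 3 * (s * F) := by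
    have hterm : ∀ i j k : Fin n,
        (2 : MvPolynomial (Fin n) ℂ) *
          ((steinerDist G {i, j, k} : MvPolynomial (Fin n) ℂ) * X i * X j * X k)
        = ((G.dist i j : MvPolynomial (Fin n) ℂ) + (G.dist j k : MvPolynomial (Fin n) ℂ)
            + (G.dist i k : MvPolynomial (Fin n) ℂ)) * (X i * X j * X k) := by
      intro i j k
      have h := steiner_three hT i j k
      have h2' : (2 : MvPolynomial (Fin n) ℂ) * (steinerDist G {i, j, k} : _)
          = (G.dist i j : MvPolynomial (Fin n) ℂ) + (G.dist j k : _) + (G.dist i k : _) := by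
        exact_mod_cast congrArg (fun m : ℕ => (m : MvPolynomial (Fin n) ℂ)) h
      calc (2 : MvPolynomial (Fin n) ℂ) *
            ((steinerDist G {i, j, k} : MvPolynomial (Fin n) ℂ) * X i * X j * X k)
          = ((2 : MvPolynomial (Fin n) ℂ) *
              (steinerDist G {i, j, k} : MvPolynomial (Fin n) ℂ)) *
              (X i * X j * X k) := by ring
        _ = _ := by rw [h2']
    rw [steinerForm3]
    simp_rw [map_natCast (MvPolynomial.C : ℂ →+* MvPolynomial (Fin n) ℂ), Finset.mul_sum, hterm,
      add_mul, Finset.sum_add_distrib]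
    have hs1 : ∑ i, ∑ j, ∑ k : Fin n,
        (G.dist i j : MvPolynomial (Fin n) ℂ) * (X i * X j * X k) = F * s := by
      have hin : ∀ i j : Fin n, ∑ k, (G.dist i j : MvPolynomial (Fin n) ℂ) * (X i * X j * X k)
          = ((G.dist i j : MvPolynomial (Fin n) ℂ) * X i * X j) * s := by
        intro i j
        rw [hs, sPoly, Finset.mul_sum]
        exact Finset.sum_congr rfl fun k _ => by ring
      simp_rw [hin, ← Finset.sum_mul, hF]
    have hs2 : ∑ i, ∑ j, ∑ k : Fin n,
        (G.dist j k : MvPolynomial (Fin n) ℂ) * (X i * X j * X k) = s * F := by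
      have hin : ∀ i : Fin n, ∑ j, ∑ k : Fin n,
          (G.dist j k : MvPolynomial (Fin n) ℂ) * (X i * X j * X k) = X i * F := by
        intro i
        rw [hF, Finset.mul_sum]
        refine Finset.sum_congr rfl fun j _ => ?_
        rw [Finset.mul_sum]
        exact Finset.sum_congr rfl fun k _ => by ring
      simp_rw [hin, ← Finset.sum_mul, hs, sPoly]
    have hs3 : ∑ i, ∑ j, ∑ k : Fin n,
        (G.dist i k : MvPolynomial (Fin n) ℂ) * (X i * X j * X k) = F * s := by
      have hswap : ∀ i : Fin n, ∑ j, ∑ k : Fin n,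
          (G.dist i k : MvPolynomial (Fin n) ℂ) * (X i * X j * X k)
          = ∑ k, ∑ j : Fin n, (G.dist i k : MvPolynomial (Fin n) ℂ) * (X i * X j * X k) :=
        fun i => Finset.sum_comm
      have hin : ∀ i g : Fin n, ∑ j : Fin n,
          (G.dist i g : MvPolynomial (Fin n) ℂ) * (X i * X j * X g)
          = ((G.dist i g : MvPolynomial (Fin n) ℂ) * X i * X g) * s := by
        intro i g
        rw [hs, sPoly, Finset.mul_sum]
        exact Finset.sum_congr rfl fun j _ => by ring
      simp_rw [hswap, hin, ← Finset.sum_mul, hF]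
    rw [hs1, hs2, hs3]
    ring
  have hFA : F = A + A := by
    have hpt : ∀ i j : Fin n, (G.dist i j : MvPolynomial (Fin n) ℂ) * X i * X j
        = (if i < j then (G.dist i j : MvPolynomial (Fin n) ℂ) * X i * X j else 0)
          + (if j < i then (G.dist i j : MvPolynomial (Fin n) ℂ) * X i * X j else 0) := by
      intro i j
      rcases lt_trichotomy i j with h | h | h
      · rw [if_pos h, if_neg (asymm h), add_zero]
      · subst h
        rw [if_neg (lt_irrefl i), SimpleGraph.dist_self, Nat.cast_zero,
          zero_mul, zero_mul, add_zero]
      · rw [if_neg (asymm h), if_pos h, zero_add]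
    have hA' : ∑ i, ∑ j, (if j < i then (G.dist i j : MvPolynomial (Fin n) ℂ) * X i * X j
        else 0) = A := by
      rw [Finset.sum_comm]
      rw [hA]
      refine Finset.sum_congr rfl fun j _ => Finset.sum_congr rfl fun i _ => ?_
      rcases lt_or_ge j i with h | h
      · rw [if_pos h, if_pos h, SimpleGraph.dist_comm]
        ring
      · rw [if_neg (not_lt.mpr h), if_neg (not_lt.mpr h)]
    calc F = ∑ i, ∑ j, ((if i < j then (G.dist i j : MvPolynomial (Fin n) ℂ) * X i * X j
          else 0) + (if j < i then (G.dist i j : MvPolynomial (Fin n) ℂ) * X i * X j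
          else 0)) := by
          rw [hF]
          exact Finset.sum_congr rfl fun i _ => Finset.sum_congr rfl fun j _ => hpt i j
      _ = A + A := by
          simp_rw [Finset.sum_add_distrib]
          rw [hA', hA]
  have hrhs : (2 : MvPolynomial (Fin n) ℂ) * (s * gPoly G) = 3 * (s * F) := by
    have hgA : gPoly G = 3 * A := by
      rw [gPoly, hA]
      simp_rw [map_natCast (MvPolynomial.C : ℂ →+* MvPolynomial (Fin n) ℂ)]
    rw [hgA, hFA]
    ring
  have main : steinerForm3 G = sPoly n * gPoly G := by
    apply mul_left_cancel₀ h2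
    rw [hlhs, ← hs, hrhs]
  exact ⟨main, main ▸ Dvd.intro _ rfl⟩
end

section
/- Let T be a tree on n ≥ 2 vertices and v ∈ ℂ^n a Steiner nullvector of order 3, i.e., a common zero of all partial derivatives of the Steiner 3-form p_T^{(3)}. Then the sum of the coordinates of v equals 0. -/
open MvPolynomial Finset

namespace SteinerAux

open SimpleGraph Walk
set_option linter.unusedSectionVars false

variable {V : Type*} [DecidableEq V] {G : SimpleGraph V}

/-- In a tree, every path realizes the distance between its endpoints. -/
lemma path_length_eq_dist (hT : G.IsTree) {a b : V} {p : G.Walk a b} (hp : p.IsPath) :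
    p.length = G.dist a b := by
  obtain ⟨q, hq, hql⟩ := hT.isConnected.exists_path_of_dist a b
  obtain ⟨u, _, hu2⟩ := hT.existsUnique_path a b
  rw [hu2 p hp, ← hu2 q hq, hql]

/-- Points on a path split the distance. -/
lemma dist_add_of_mem_support (hT : G.IsTree) {x y m : V} {p : G.Walk x y}
    (hp : p.IsPath) (hm : m ∈ p.support) :
    G.dist x y = G.dist x m + G.dist m y := by
  have h1 := path_length_eq_dist hT (hp.takeUntil hm)
  have h2 := path_length_eq_dist hT (hp.dropUntil hm)
  have h3 := path_length_eq_dist hT hp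
  have h4 := congrArg Walk.length (p.take_spec hm)
  rw [Walk.length_append] at h4
  omega

lemma adj_dist_diff (hT : G.IsTree) {a b : V} (hab : G.Adj a b) (j : V) :
    G.dist a j = G.dist b j + 1 ∨ G.dist b j = G.dist a j + 1 := by
  obtain ⟨p, hp, hl⟩ := hT.isConnected.exists_path_of_dist a j
  by_cases hb : b ∈ p.support
  · left
    have := dist_add_of_mem_support hT hp hb
    have hone : G.dist a b = 1 := SimpleGraph.dist_eq_one_iff_adj.mpr hab
    omega
  · right
    have hq : (Walk.cons hab.symm p).IsPath := hp.cons hb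
    have := path_length_eq_dist hT hq
    simp only [Walk.length_cons] at this
    omega

/-- The key rigidity lemma: if the sign of `dist a · - dist b ·` flips across the
edge `x y`, then `{x, y} = {a, b}` (with matching orientation). -/
lemma eq_of_sign_flip (hT : G.IsTree) {a b x y : V} (hab : G.Adj a b) (hxy : G.Adj x y)
    (hx : G.dist a x = G.dist b x + 1) (hy : G.dist b y = G.dist a y + 1) :
    x = b ∧ y = a := by
  have h1 := adj_dist_diff hT hxy a
  have h2 := adj_dist_diff hT hxy b
  have c1 : G.dist x a = G.dist a x := SimpleGraph.dist_comm (u := x) (v := a)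
  have c2 : G.dist y a = G.dist a y := SimpleGraph.dist_comm (u := y) (v := a)
  have c3 : G.dist x b = G.dist b x := SimpleGraph.dist_comm (u := x) (v := b)
  have c4 : G.dist y b = G.dist b y := SimpleGraph.dist_comm (u := y) (v := b)
  have hay : G.dist a y = G.dist b x := by omega
  have hby : G.dist b y = G.dist b x + 1 := by omega
  obtain ⟨pbx, hpbx, hlbx⟩ := hT.isConnected.exists_path_of_dist b x
  obtain ⟨pay, hpay, hlay⟩ := hT.isConnected.exists_path_of_dist a y
  set w : G.Walk a x := Walk.cons hab pbx with hw_def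
  have hw : w.IsPath := by
    apply Walk.isPath_of_length_eq_dist
    simp only [hw_def, Walk.length_cons, hlbx]
    omega
  set w' : G.Walk a x := pay.append (Walk.cons hxy.symm Walk.nil) with hw'_def
  have hw' : w'.IsPath := by
    apply Walk.isPath_of_length_eq_dist
    simp only [hw'_def, Walk.length_append, Walk.length_cons, Walk.length_nil, hlay]
    omega
  obtain ⟨u, _, hu⟩ := hT.existsUnique_path a x
  have heq : w = w' := by rw [hu w hw, hu w' hw']
  have hbw : b ∈ w.support := by
    simp only [hw_def, Walk.support_cons, List.mem_cons]
    exact Or.inr pbx.start_mem_support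
  rw [heq] at hbw
  simp only [hw'_def, Walk.mem_support_append_iff, Walk.support_cons, Walk.support_nil,
    List.mem_cons, List.mem_singleton] at hbw
  rcases hbw with hbp | (hby' | hbx | hfalse)
  · exfalso
    have hsplit := dist_add_of_mem_support hT hpay hbp
    have hone : G.dist a b = 1 := SimpleGraph.dist_eq_one_iff_adj.mpr hab
    omega
  · exfalso
    subst hby'
    simp [SimpleGraph.dist_self] at hby
  · subst hbx
    have hzero : G.dist a y = 0 := by
      have : G.dist b b = 0 := SimpleGraph.dist_self
      omega
    have : a = y := (hT.isConnected.dist_eq_zero_iff).mp hzero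
    exact ⟨rfl, this.symm⟩
  · exact absurd hfalse (by simp)

/-- Sign characterization of edges lying on a path, forward direction. -/
lemma sign_of_mem_edges (hT : G.IsTree) {a b x y : V} (hab : G.Adj a b)
    {p : G.Walk x y} (hp : p.IsPath) (he : s(a, b) ∈ p.edges) :
    ((G.dist a x : ℤ) - G.dist b x) * ((G.dist a y : ℤ) - G.dist b y) = -1 := by
  have ha : a ∈ p.support := p.fst_mem_support_of_mem_edges he
  have hb : b ∈ p.support := p.snd_mem_support_of_mem_edges he
  have e1 := dist_add_of_mem_support hT hp ha
  have e2 := dist_add_of_mem_support hT hp hb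
  have c1 : G.dist x a = G.dist a x := SimpleGraph.dist_comm (u := x) (v := a)
  have c2 : G.dist x b = G.dist b x := SimpleGraph.dist_comm (u := x) (v := b)
  have c3 : G.dist a y = G.dist y a := SimpleGraph.dist_comm (u := a) (v := y)
  have c4 : G.dist b y = G.dist y b := SimpleGraph.dist_comm (u := b) (v := y)
  rcases adj_dist_diff hT hab x with h1 | h1 <;> rcases adj_dist_diff hT hab y with h2 | h2
  · exfalso; omega
  · have f1 : (G.dist a x : ℤ) - G.dist b x = 1 := by omega
    have f2 : (G.dist a y : ℤ) - G.dist b y = -1 := by omega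
    rw [f1, f2]; ring
  · have f1 : (G.dist a x : ℤ) - G.dist b x = -1 := by omega
    have f2 : (G.dist a y : ℤ) - G.dist b y = 1 := by omega
    rw [f1, f2]; ring
  · exfalso; omega

/-- Sign characterization of edges lying on a path, backward direction. -/
lemma mem_edges_of_sign (hT : G.IsTree) {a b : V} (hab : G.Adj a b) :
    ∀ {x y : V} (p : G.Walk x y), p.IsPath →
      ((G.dist a x : ℤ) - G.dist b x) * ((G.dist a y : ℤ) - G.dist b y) = -1 →
      s(a, b) ∈ p.edges := by
  intro x y p
  induction p with
  | @nil u =>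
    intro _ hs
    exfalso
    rcases adj_dist_diff hT hab u with h1 | h1
    · have f1 : (G.dist a u : ℤ) - G.dist b u = 1 := by omega
      rw [f1] at hs; norm_num at hs
    · have f1 : (G.dist a u : ℤ) - G.dist b u = -1 := by omega
      rw [f1] at hs; norm_num at hs
  | @cons x x' y h q ih =>
    intro hp hs
    have hq : q.IsPath := hp.of_cons
    rcases adj_dist_diff hT hab x with h1 | h1 <;> rcases adj_dist_diff hT hab x' with h2 | h2
    · -- both on + side
      have f1 : (G.dist a x : ℤ) - G.dist b x = 1 := by omega
      have f2 : (G.dist a x' : ℤ) - G.dist b x' = 1 := by omega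
      rw [f1, one_mul] at hs
      have : s(a, b) ∈ q.edges := ih hq (by rw [f2, one_mul]; exact hs)
      rw [Walk.edges_cons]
      exact List.mem_cons_of_mem _ this
    · -- sign flip across edge (x, x')
      obtain ⟨hxb, hx'a⟩ := eq_of_sign_flip hT hab h h1 h2
      subst hxb; subst hx'a
      rw [Walk.edges_cons]
      exact List.mem_cons.mpr (Or.inl (Sym2.eq_swap))
    · -- sign flip, other orientation
      obtain ⟨hxa, hx'b⟩ := eq_of_sign_flip hT hab.symm h h1 h2
      subst hxa; subst hx'b
      rw [Walk.edges_cons]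
      exact List.mem_cons.mpr (Or.inl rfl)
    · -- both on - side
      have f1 : (G.dist a x : ℤ) - G.dist b x = -1 := by omega
      have f2 : (G.dist a x' : ℤ) - G.dist b x' = -1 := by omega
      rw [f1] at hs
      have hB : (G.dist a y : ℤ) - G.dist b y = 1 := by linarith
      have : s(a, b) ∈ q.edges := ih hq (by rw [f2, hB]; ring)
      rw [Walk.edges_cons]
      exact List.mem_cons_of_mem _ this

/-- Appending two paths that intersect only in the middle vertex is a path. -/
lemma isPath_append {u m w : V} {p : G.Walk u m} {q : G.Walk m w}
    (hp : p.IsPath) (hq : q.IsPath)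
    (h : ∀ x, x ∈ p.support → x ∈ q.support → x = m) : (p.append q).IsPath := by
  rw [Walk.isPath_def, Walk.support_append, List.nodup_append]
  have hqc : q.support = m :: q.support.tail := q.support_eq_cons
  have hqn := hq.support_nodup
  have hmt : m ∉ q.support.tail := by
    rw [hqc] at hqn
    exact (List.nodup_cons.mp hqn).1
  refine ⟨hp.support_nodup, ?_, ?_⟩
  · rw [hqc] at hqn
    exact (List.nodup_cons.mp hqn).2
  · intro x hx y hxt hxy
    subst hxy
    have hxq : x ∈ q.support := by rw [hqc]; exact List.mem_cons_of_mem _ hxt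
    have := h x hx hxq
    subst this
    exact hmt hxt

/-- Edge sets of walks are finite. -/
lemma edges_set_finite {x y : V} (p : G.Walk x y) : {e : Sym2 V | e ∈ p.edges}.Finite :=
  p.edges.finite_toSet

lemma edges_set_ncard {x y : V} {p : G.Walk x y} (hp : p.IsPath) :
    {e : Sym2 V | e ∈ p.edges}.ncard = p.length := by
  have h1 : {e : Sym2 V | e ∈ p.edges} = ↑p.edges.toFinset := by ext e; simp
  rw [h1, Set.ncard_coe_finset, List.toFinset_card_of_nodup hp.edges_nodup,
    Walk.length_edges]

/-- The Steiner distance of a triple in a tree. -/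
lemma steinerDist_triple (hT : G.IsTree) [Fintype V] (i j k : V) :
    2 * steinerDist G {i, j, k} = G.dist i j + G.dist j k + G.dist i k := by
  obtain ⟨P, hP, hPl⟩ := hT.isConnected.exists_path_of_dist i j
  have hne : P.support.toFinset.Nonempty := ⟨i, by simp [P.start_mem_support]⟩
  obtain ⟨m, hmP', hmin⟩ := P.support.toFinset.exists_min_image (fun x => G.dist x k) hne
  have hmP : m ∈ P.support := by simpa using hmP'
  obtain ⟨R, hR, hRl⟩ := hT.isConnected.exists_path_of_dist m k
  have hinter : ∀ x, x ∈ P.support → x ∈ R.support → x = m := by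
    intro x hxP hxR
    have hsplit := dist_add_of_mem_support hT hR hxR
    have hle := hmin x (by simpa using hxP)
    have hz : G.dist m x = 0 := by omega
    exact ((hT.isConnected.dist_eq_zero_iff).mp hz).symm
  set A := P.takeUntil m hmP with hA_def
  have hA : A.IsPath := hP.takeUntil hmP
  have hAl : A.length = G.dist i m := path_length_eq_dist hT hA
  have hD : (P.dropUntil m hmP).IsPath := hP.dropUntil hmP
  have hDl : (P.dropUntil m hmP).length = G.dist m j := path_length_eq_dist hT hD
  have hij : G.dist i j = G.dist i m + G.dist m j := dist_add_of_mem_support hT hP hmP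
  have hAR : (A.append R).IsPath :=
    isPath_append hA hR (fun x hx hx2 => hinter x (P.support_takeUntil_subset hmP hx) hx2)
  have hik : G.dist i k = G.dist i m + G.dist m k := by
    have := path_length_eq_dist hT hAR
    rw [Walk.length_append, hAl, hRl] at this
    omega
  set B := (P.dropUntil m hmP).reverse with hB_def
  have hB : B.IsPath := hD.reverse
  have hBR : (B.append R).IsPath := by
    refine isPath_append hB hR (fun x hx hx2 => hinter x ?_ hx2)
    exact P.support_dropUntil_subset hmP (by simpa [hB_def, Walk.support_reverse] using hx)
  have hjk : G.dist j k = G.dist j m + G.dist m k := by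
    have hlen := path_length_eq_dist hT hBR
    rw [Walk.length_append, hB_def, Walk.length_reverse, hDl, hRl] at hlen
    have cmj : G.dist m j = G.dist j m := SimpleGraph.dist_comm (u := m) (v := j)
    omega
  set t := G.dist i m + G.dist m j + G.dist m k with ht_def
  -- disjointness of edge sets of P and R
  have hdisj : Disjoint {e : Sym2 V | e ∈ P.edges} {e : Sym2 V | e ∈ R.edges} := by
    rw [Set.disjoint_left]
    intro e heP heR
    induction e with
    | h c d =>
      have hc : c = m := hinter c (P.fst_mem_support_of_mem_edges heP)
        (R.fst_mem_support_of_mem_edges heR)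
      have hd : d = m := hinter d (P.snd_mem_support_of_mem_edges heP)
        (R.snd_mem_support_of_mem_edges heR)
      have hadj : G.Adj c d := P.adj_of_mem_edges heP
      rw [hc, hd] at hadj
      exact G.irrefl hadj
  have hcardU : ({e : Sym2 V | e ∈ P.edges} ∪ {e : Sym2 V | e ∈ R.edges}).ncard = t := by
    rw [Set.ncard_union_eq hdisj (edges_set_finite P) (edges_set_finite R),
      edges_set_ncard hP, edges_set_ncard hR, hPl, hRl, hij]
  -- membership: the union subgraph
  have hmem : t ∈ {m' | ∃ H : G.Subgraph, H.Connected ∧ ({i, j, k} : Set V) ⊆ H.verts ∧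
      H.edgeSet.ncard = m'} := by
    refine ⟨P.toSubgraph ⊔ R.toSubgraph, ?_, ?_, ?_⟩
    · refine SimpleGraph.Subgraph.connected_sup P.toSubgraph_connected.preconnected
        R.toSubgraph_connected.preconnected ⟨m, ?_⟩
      constructor
      · exact (P.mem_verts_toSubgraph).mpr hmP
      · exact (R.mem_verts_toSubgraph).mpr R.start_mem_support
    · intro z hz
      rw [SimpleGraph.Subgraph.verts_sup]
      rcases hz with rfl | rfl | rfl
      · exact Or.inl ((P.mem_verts_toSubgraph).mpr P.start_mem_support)
      · exact Or.inl ((P.mem_verts_toSubgraph).mpr P.end_mem_support)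
      · exact Or.inr ((R.mem_verts_toSubgraph).mpr R.end_mem_support)
    · rw [SimpleGraph.Subgraph.edgeSet_sup, P.edgeSet_toSubgraph, R.edgeSet_toSubgraph]
      exact hcardU
  -- lower bound
  have hlow : ∀ b ∈ {m' | ∃ H : G.Subgraph, H.Connected ∧ ({i, j, k} : Set V) ⊆ H.verts ∧
      H.edgeSet.ncard = m'}, t ≤ b := by
    rintro b ⟨H, hHc, hHv, rfl⟩
    have hpre : H.Preconnected := hHc.preconnected
    have hiH : i ∈ H.verts := hHv (by simp)
    have hjH : j ∈ H.verts := hHv (by simp)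
    have hkH : k ∈ H.verts := hHv (by simp)
    -- path i-j is inside H
    obtain ⟨w1, hw1⟩ := (SimpleGraph.Subgraph.preconnected_iff_forall_exists_walk_subgraph H).mp
      hpre hiH hjH
    obtain ⟨w2, hw2⟩ := (SimpleGraph.Subgraph.preconnected_iff_forall_exists_walk_subgraph H).mp
      hpre hiH hkH
    obtain ⟨u1, _, hu1⟩ := hT.existsUnique_path i j
    obtain ⟨u2, _, hu2⟩ := hT.existsUnique_path i k
    have hPsub : {e : Sym2 V | e ∈ P.edges} ⊆ H.edgeSet := by
      intro e he
      have hPb : P = w1.bypass := by rw [hu1 P hP, hu1 w1.bypass w1.bypass_isPath]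
      have : e ∈ w1.edges := w1.edges_bypass_subset (by rw [← hPb]; exact he)
      have : e ∈ w1.toSubgraph.edgeSet := (w1.mem_edges_toSubgraph).mpr this
      exact SimpleGraph.Subgraph.edgeSet_mono hw1 this
    have hRsub : {e : Sym2 V | e ∈ R.edges} ⊆ H.edgeSet := by
      intro e he
      have hARb : A.append R = w2.bypass := by
        rw [hu2 _ hAR, hu2 w2.bypass w2.bypass_isPath]
      have heAR : e ∈ (A.append R).edges := by
        rw [Walk.edges_append]
        exact List.mem_append_right _ he
      have : e ∈ w2.edges := w2.edges_bypass_subset (by rw [← hARb]; exact heAR)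
      have : e ∈ w2.toSubgraph.edgeSet := (w2.mem_edges_toSubgraph).mpr this
      exact SimpleGraph.Subgraph.edgeSet_mono hw2 this
    calc t = ({e : Sym2 V | e ∈ P.edges} ∪ {e : Sym2 V | e ∈ R.edges}).ncard := hcardU.symm
    _ ≤ H.edgeSet.ncard := Set.ncard_le_ncard (Set.union_subset hPsub hRsub) H.edgeSet.toFinite
  have hsd : steinerDist G {i, j, k} = t := by
    unfold steinerDist
    exact le_antisymm (Nat.sInf_le hmem) (le_csInf ⟨t, hmem⟩ hlow)
  rw [hsd, hij, hjk, hik]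
  have cmj : G.dist m j = G.dist j m := SimpleGraph.dist_comm (u := m) (v := j)
  omega

/-- The symmetrized per-edge sign function. -/
noncomputable def tf [Fintype V] (G : SimpleGraph V) (x y : V) : Sym2 V → ℂ :=
  Sym2.lift ⟨fun a b => ((G.dist a x : ℂ) - G.dist b x) * ((G.dist a y : ℂ) - G.dist b y),
    fun a b => by ring⟩

lemma sum_edge_sign (hT : G.IsTree) [Fintype V] [Fintype G.edgeSet] (x y : V) :
    ∑ e ∈ G.edgeFinset, tf G x y e = (G.edgeFinset.card : ℂ) - 2 * G.dist x y := by
  classical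
  obtain ⟨p, hp, hpl⟩ := hT.isConnected.exists_path_of_dist x y
  have key : ∀ e ∈ G.edgeFinset, tf G x y e = if e ∈ p.edges then (-1 : ℂ) else 1 := by
    intro e he
    induction e with
    | h a b =>
      have hab : G.Adj a b := by
        rw [SimpleGraph.mem_edgeFinset, SimpleGraph.mem_edgeSet] at he
        exact he
      show ((G.dist a x : ℂ) - G.dist b x) * ((G.dist a y : ℂ) - G.dist b y) = _
      by_cases hmem : s(a, b) ∈ p.edges
      · rw [if_pos hmem]
        have hz := sign_of_mem_edges hT hab hp hmem
        have : ((((G.dist a x : ℤ) - G.dist b x) * ((G.dist a y : ℤ) - G.dist b y) : ℤ) : ℂ)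
            = ((-1 : ℤ) : ℂ) := by exact_mod_cast hz
        push_cast at this
        convert this using 2
      · rw [if_neg hmem]
        rcases adj_dist_diff hT hab x with h1 | h1 <;> rcases adj_dist_diff hT hab y with h2 | h2
        · have f1 : (G.dist a x : ℂ) - G.dist b x = 1 := by rw [h1]; push_cast; ring
          have f2 : (G.dist a y : ℂ) - G.dist b y = 1 := by rw [h2]; push_cast; ring
          rw [f1, f2]; ring
        · exfalso
          refine hmem (mem_edges_of_sign hT hab p hp ?_)
          have f1 : (G.dist a x : ℤ) - G.dist b x = 1 := by omega
          have f2 : (G.dist a y : ℤ) - G.dist b y = -1 := by omega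
          rw [f1, f2]; ring
        · exfalso
          refine hmem (mem_edges_of_sign hT hab p hp ?_)
          have f1 : (G.dist a x : ℤ) - G.dist b x = -1 := by omega
          have f2 : (G.dist a y : ℤ) - G.dist b y = 1 := by omega
          rw [f1, f2]; ring
        · have f1 : (G.dist a x : ℂ) - G.dist b x = -1 := by rw [h1]; push_cast; ring
          have f2 : (G.dist a y : ℂ) - G.dist b y = -1 := by rw [h2]; push_cast; ring
          rw [f1, f2]; ring
  rw [Finset.sum_congr rfl key]
  have hsplit : ∀ e : Sym2 V, (if e ∈ p.edges then (-1 : ℂ) else 1)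
      = 1 - 2 * (if e ∈ p.edges then (1 : ℂ) else 0) := by
    intro e; split <;> ring
  rw [Finset.sum_congr rfl (fun e _ => hsplit e), Finset.sum_sub_distrib,
    Finset.sum_const, ← Finset.mul_sum, Finset.sum_boole]
  have hfil : G.edgeFinset.filter (fun e => e ∈ p.edges) = p.edges.toFinset := by
    ext e
    simp only [Finset.mem_filter, List.mem_toFinset, SimpleGraph.mem_edgeFinset]
    exact ⟨fun h => h.2, fun h => ⟨p.edges_subset_edgeSet h, h⟩⟩
  rw [hfil]
  rw [List.toFinset_card_of_nodup hp.edges_nodup, Walk.length_edges, hpl]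
  simp [nsmul_eq_mul]

end SteinerAux

/-- Helper for evaluating the derivative of a cubic monomial. -/
lemma eval_pderiv_cube {N : ℕ} (v : Fin N → ℂ) (r i j k : Fin N) (c : ℂ) :
    MvPolynomial.eval v (MvPolynomial.pderiv r (MvPolynomial.C c *
      MvPolynomial.X i * MvPolynomial.X j * MvPolynomial.X k)) =
    c * ((if i = r then v j * v k else 0) + (if j = r then v i * v k else 0)
      + (if k = r then v i * v j else 0)) := by
  by_cases hi : i = r <;> by_cases hj : j = r <;> by_cases hk : k = r <;>
    subst_vars <;>
    simp [pderiv_mul, pderiv_X_self, pderiv_X_of_ne, Ne.symm, *] <;>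
    ring

private lemma key_row {n : ℕ} (G : SimpleGraph (Fin (n + 2))) (hT : G.IsTree)
    (v : Fin (n + 2) → ℂ)
    (hv : ∀ r, MvPolynomial.eval v (MvPolynomial.pderiv r (steinerForm3 G)) = 0)
    (r : Fin (n + 2)) :
    2 * ((∑ i, v i) * ∑ x, (G.dist r x : ℂ) * v x)
      + (∑ x, ∑ y, (G.dist x y : ℂ) * v x * v y) = 0 := by
  classical
  have h0 := hv r
  rw [steinerForm3] at h0
  simp only [map_sum, eval_pderiv_cube] at h0
  have pull : ∀ (i : Fin (n + 2)) (F : Fin (n + 2) → Fin (n + 2) → ℂ),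
      (∑ j, ∑ k, if i = r then F j k else 0) = if i = r then ∑ j, ∑ k, F j k else 0 :=
    fun i F => by split <;> simp
  have e1 : ∑ i, ∑ j, ∑ k, (steinerDist G {i, j, k} : ℂ) *
        ((if i = r then v j * v k else 0) + (if j = r then v i * v k else 0)
          + (if k = r then v i * v j else 0))
      = 3 * ∑ j, ∑ k, (steinerDist G {r, j, k} : ℂ) * (v j * v k) := by
    simp only [mul_add, Finset.sum_add_distrib]
    have S1 : ∑ i, ∑ j, ∑ k, (steinerDist G {i, j, k} : ℂ) * (if i = r then v j * v k else 0)
        = ∑ j, ∑ k, (steinerDist G {r, j, k} : ℂ) * (v j * v k) := by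
      have h1 : ∀ i j k : Fin (n + 2), (steinerDist G {i, j, k} : ℂ) *
          (if i = r then v j * v k else 0)
          = if i = r then (steinerDist G {i, j, k} : ℂ) * (v j * v k) else 0 := by
        intros; split <;> ring
      simp only [h1, pull]
      simp
    have S2 : ∑ i, ∑ j, ∑ k, (steinerDist G {i, j, k} : ℂ) * (if j = r then v i * v k else 0)
        = ∑ j, ∑ k, (steinerDist G {r, j, k} : ℂ) * (v j * v k) := by
      have h1 : ∀ i j k : Fin (n + 2), (steinerDist G {i, j, k} : ℂ) *
          (if j = r then v i * v k else 0)
          = if j = r then (steinerDist G {i, j, k} : ℂ) * (v i * v k) else 0 := by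
        intros; split <;> ring
      have inner : ∀ i : Fin (n + 2), (∑ j, ∑ k,
          if j = r then (steinerDist G {i, j, k} : ℂ) * (v i * v k) else 0)
          = ∑ k, (steinerDist G {i, r, k} : ℂ) * (v i * v k) := by
        intro i
        have h2 : ∀ j : Fin (n + 2), (∑ k,
            if j = r then (steinerDist G {i, j, k} : ℂ) * (v i * v k) else 0)
            = if j = r then ∑ k, (steinerDist G {i, j, k} : ℂ) * (v i * v k) else 0 :=
          fun j => by split <;> simp
        simp only [h2]
        simp
      simp only [h1, inner]
      refine Finset.sum_congr rfl fun i _ => Finset.sum_congr rfl fun k _ => ?_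
      rw [Set.insert_comm]
    have S3 : ∑ i, ∑ j, ∑ k, (steinerDist G {i, j, k} : ℂ) * (if k = r then v i * v j else 0)
        = ∑ j, ∑ k, (steinerDist G {r, j, k} : ℂ) * (v j * v k) := by
      have h1 : ∀ i j k : Fin (n + 2), (steinerDist G {i, j, k} : ℂ) *
          (if k = r then v i * v j else 0)
          = if k = r then (steinerDist G {i, j, k} : ℂ) * (v i * v j) else 0 := by
        intros; split <;> ring
      have inner : ∀ i j : Fin (n + 2), (∑ k,
          if k = r then (steinerDist G {i, j, k} : ℂ) * (v i * v j) else 0)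
          = (steinerDist G {i, j, r} : ℂ) * (v i * v j) := fun i j => by simp
      simp only [h1, inner]
      refine Finset.sum_congr rfl fun i _ => Finset.sum_congr rfl fun j _ => ?_
      have hset : ({i, j, r} : Set (Fin (n + 2))) = {r, i, j} := by
        ext z; simp only [Set.mem_insert_iff, Set.mem_singleton_iff]; tauto
      rw [hset]
    rw [S1, S2, S3]; ring
  rw [e1] at h0
  have hT0 : ∑ j, ∑ k, (steinerDist G {r, j, k} : ℂ) * (v j * v k) = 0 := by
    rcases mul_eq_zero.mp h0 with h | h
    · norm_num at h
    · exact h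
  have h2T : ∑ j, ∑ k, ((G.dist r j : ℂ) + (G.dist j k : ℂ) + (G.dist r k : ℂ)) * (v j * v k)
      = 0 := by
    have hterm : ∀ j k : Fin (n + 2),
        ((G.dist r j : ℂ) + (G.dist j k : ℂ) + (G.dist r k : ℂ)) * (v j * v k)
        = 2 * ((steinerDist G {r, j, k} : ℂ) * (v j * v k)) := by
      intro j k
      have hnat := SteinerAux.steinerDist_triple hT r j k
      have h2c : (2 : ℂ) * (steinerDist G {r, j, k} : ℂ)
          = (G.dist r j : ℂ) + (G.dist j k : ℂ) + (G.dist r k : ℂ) := by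
        exact_mod_cast congrArg (fun m : ℕ => (m : ℂ)) hnat
      rw [← h2c]; ring
    simp only [hterm, ← Finset.mul_sum]
    rw [hT0]; ring
  have A1 : ∑ j, ∑ k, (G.dist r j : ℂ) * (v j * v k)
      = (∑ x, (G.dist r x : ℂ) * v x) * (∑ i, v i) := by
    have h1 : ∀ j k : Fin (n + 2), (G.dist r j : ℂ) * (v j * v k)
        = ((G.dist r j : ℂ) * v j) * v k := fun j k => by ring
    simp only [h1]
    rw [← Finset.sum_mul_sum]
  have A3 : ∑ j, ∑ k, (G.dist r k : ℂ) * (v j * v k)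
      = (∑ i, v i) * (∑ x, (G.dist r x : ℂ) * v x) := by
    have h1 : ∀ j k : Fin (n + 2), (G.dist r k : ℂ) * (v j * v k)
        = v j * ((G.dist r k : ℂ) * v k) := fun j k => by ring
    simp only [h1]
    rw [← Finset.sum_mul_sum]
  have A2 : ∑ j, ∑ k, (G.dist j k : ℂ) * (v j * v k)
      = ∑ x, ∑ y, (G.dist x y : ℂ) * v x * v y :=
    Finset.sum_congr rfl fun j _ => Finset.sum_congr rfl fun k _ => by ring
  have expand : ∑ j, ∑ k, ((G.dist r j : ℂ) + (G.dist j k : ℂ) + (G.dist r k : ℂ)) * (v j * v k)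
      = 2 * ((∑ i, v i) * ∑ x, (G.dist r x : ℂ) * v x)
        + ∑ x, ∑ y, (G.dist x y : ℂ) * v x * v y := by
    simp only [add_mul, Finset.sum_add_distrib]
    rw [A1, A2, A3]; ring
  rw [expand] at h2T
  exact h2T

/-- The square of the "row difference" associated to an edge. -/
private noncomputable def sqf {n : ℕ} (G : SimpleGraph (Fin n)) (v : Fin n → ℂ) :
    Sym2 (Fin n) → ℂ :=
  Sym2.lift ⟨fun a b => (∑ x, ((G.dist a x : ℂ) - G.dist b x) * v x) ^ 2, fun a b => by
    dsimp only
    have h1 : ∑ x, ((G.dist b x : ℂ) - G.dist a x) * v x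
        = -(∑ x, ((G.dist a x : ℂ) - G.dist b x) * v x) := by
      rw [← Finset.sum_neg_distrib]
      exact Finset.sum_congr rfl fun x _ => by ring
    rw [h1, neg_sq]⟩

private lemma sqf_mk {n : ℕ} (G : SimpleGraph (Fin n)) (v : Fin n → ℂ) (a b : Fin n) :
    sqf G v s(a, b) = (∑ x, ((G.dist a x : ℂ) - G.dist b x) * v x) ^ 2 := rfl

private lemma tf_mk {n : ℕ} (G : SimpleGraph (Fin n)) [Fintype (Fin n)] (x y a b : Fin n) :
    SteinerAux.tf G x y s(a, b)
      = ((G.dist a x : ℂ) - G.dist b x) * ((G.dist a y : ℂ) - G.dist b y) := rfl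

theorem stmt9 {n : ℕ} (G : SimpleGraph (Fin (n + 2))) (hT : G.IsTree)
    (v : Fin (n + 2) → ℂ)
    (hv : ∀ r, MvPolynomial.eval v (MvPolynomial.pderiv r (steinerForm3 G)) = 0) :
    ∑ i, v i = 0 := by
  classical
  letI : Fintype G.edgeSet := Set.Finite.fintype (Set.toFinite _)
  by_contra hs0
  -- Step 2/3: the distance quadratic form vanishes, and then all "rows" vanish.
  have hQ0 : (∑ x, ∑ y, (G.dist x y : ℂ) * v x * v y) = 0 := by
    have hsum : ∑ r, v r * (2 * ((∑ i, v i) * ∑ x, (G.dist r x : ℂ) * v x)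
        + (∑ x, ∑ y, (G.dist x y : ℂ) * v x * v y)) = 0 := by
      refine Finset.sum_eq_zero fun r _ => ?_
      rw [key_row G hT v hv r, mul_zero]
    have hrowQ : ∑ r, v r * (∑ x, (G.dist r x : ℂ) * v x)
        = ∑ x, ∑ y, (G.dist x y : ℂ) * v x * v y := by
      refine Finset.sum_congr rfl fun r _ => ?_
      rw [Finset.mul_sum]
      exact Finset.sum_congr rfl fun x _ => by ring
    have hexp : ∑ r, v r * (2 * ((∑ i, v i) * ∑ x, (G.dist r x : ℂ) * v x)
        + (∑ x, ∑ y, (G.dist x y : ℂ) * v x * v y))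
        = 2 * ((∑ i, v i) * (∑ r, v r * (∑ x, (G.dist r x : ℂ) * v x)))
          + (∑ x, ∑ y, (G.dist x y : ℂ) * v x * v y) * (∑ i, v i) := by
      have h1 : ∀ r : Fin (n + 2), v r * (2 * ((∑ i, v i) * ∑ x, (G.dist r x : ℂ) * v x)
          + (∑ x, ∑ y, (G.dist x y : ℂ) * v x * v y))
          = 2 * ((∑ i, v i) * (v r * (∑ x, (G.dist r x : ℂ) * v x)))
            + (∑ x, ∑ y, (G.dist x y : ℂ) * v x * v y) * v r := fun r => by ring
      simp only [h1]
      rw [Finset.sum_add_distrib, ← Finset.mul_sum, ← Finset.mul_sum, ← Finset.mul_sum]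
    rw [hexp, hrowQ] at hsum
    have h3 : 3 * ((∑ i, v i) * (∑ x, ∑ y, (G.dist x y : ℂ) * v x * v y)) = 0 := by
      rw [← hsum]; ring
    rcases mul_eq_zero.mp h3 with h | h
    · norm_num at h
    rcases mul_eq_zero.mp h with h' | h'
    · exact absurd h' hs0
    · exact h'
  have hrow : ∀ r : Fin (n + 2), (∑ x, (G.dist r x : ℂ) * v x) = 0 := by
    intro r
    have h := key_row G hT v hv r
    rw [hQ0, add_zero] at h
    rcases mul_eq_zero.mp h with h' | h'
    · norm_num at h'
    rcases mul_eq_zero.mp h' with h'' | h''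
    · exact absurd h'' hs0
    · exact h''
  -- Step 4: evaluate the edge sum in two ways
  have hzero : ∀ a b : Fin (n + 2), (∑ x, ((G.dist a x : ℂ) - G.dist b x) * v x) = 0 := by
    intro a b
    have h1 : ∀ x : Fin (n + 2), ((G.dist a x : ℂ) - G.dist b x) * v x
        = (G.dist a x : ℂ) * v x - (G.dist b x : ℂ) * v x := fun x => by ring
    simp only [h1]
    rw [Finset.sum_sub_distrib, hrow a, hrow b, sub_zero]
  have hS0 : ∑ e ∈ G.edgeFinset, sqf G v e = 0 := by
    refine Finset.sum_eq_zero fun e _ => ?_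
    induction e with
    | h a b =>
      rw [sqf_mk, hzero a b]
      ring
  have hexpand : ∀ e : Sym2 (Fin (n + 2)), sqf G v e
      = ∑ x, ∑ y, (v x * v y) * SteinerAux.tf G x y e := by
    intro e
    induction e with
    | h a b =>
      rw [sqf_mk, sq, Finset.sum_mul_sum]
      exact Finset.sum_congr rfl fun x _ => Finset.sum_congr rfl fun y _ => by
        rw [tf_mk]; ring
  have hcard : (G.edgeFinset.card : ℂ) = (n + 1 : ℕ) := by
    have h := hT.card_edgeFinset
    rw [Fintype.card_fin] at h
    have : G.edgeFinset.card = n + 1 := by omega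
    rw [this]
  have hS2 : ∑ e ∈ G.edgeFinset, sqf G v e
      = ((n + 1 : ℕ) : ℂ) * ((∑ i, v i) * (∑ i, v i))
        - 2 * (∑ x, ∑ y, (G.dist x y : ℂ) * v x * v y) := by
    calc ∑ e ∈ G.edgeFinset, sqf G v e
        = ∑ e ∈ G.edgeFinset, ∑ x, ∑ y, (v x * v y) * SteinerAux.tf G x y e :=
          Finset.sum_congr rfl fun e _ => hexpand e
      _ = ∑ x, ∑ y, ∑ e ∈ G.edgeFinset, (v x * v y) * SteinerAux.tf G x y e := by
          rw [Finset.sum_comm]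
          refine Finset.sum_congr rfl fun x _ => ?_
          rw [Finset.sum_comm]
      _ = ∑ x, ∑ y, (v x * v y) * (((n + 1 : ℕ) : ℂ) - 2 * G.dist x y) := by
          refine Finset.sum_congr rfl fun x _ => Finset.sum_congr rfl fun y _ => ?_
          rw [← Finset.mul_sum, SteinerAux.sum_edge_sign hT x y, hcard]
      _ = ((n + 1 : ℕ) : ℂ) * ((∑ x, v x) * (∑ y, v y))
          - 2 * (∑ x, ∑ y, (G.dist x y : ℂ) * v x * v y) := by
          have h1 : ∀ x y : Fin (n + 2), (v x * v y) * (((n + 1 : ℕ) : ℂ) - 2 * G.dist x y)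
              = ((n + 1 : ℕ) : ℂ) * (v x * v y) - 2 * ((G.dist x y : ℂ) * v x * v y) :=
            fun x y => by ring
          simp only [h1]
          simp only [Finset.sum_sub_distrib]
          congr 1
          · have h2 : ∀ x : Fin (n + 2), ∑ y, ((n + 1 : ℕ) : ℂ) * (v x * v y)
                = ((n + 1 : ℕ) : ℂ) * v x * (∑ i, v i) := by
              intro x
              rw [Finset.mul_sum]
              exact Finset.sum_congr rfl fun y _ => by ring
            simp only [h2]
            rw [← Finset.sum_mul, ← Finset.mul_sum]
            ring
          · simp only [Finset.mul_sum]
  rw [hS0, hQ0] at hS2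
  rw [mul_zero, sub_zero] at hS2
  rcases mul_eq_zero.mp hS2.symm with h | h
  · exact absurd h (Nat.cast_ne_zero.mpr (Nat.succ_ne_zero n))
  rcases mul_eq_zero.mp h with h' | h'
  · exact absurd h' hs0
  · exact absurd h' hs0
end

section
/- Let T be a tree on n vertices with distance matrix D, let d_j denote the degree of vertex j and a_{ij} the indicator that ij is an edge. Then D is invertible and the entries of D^{-1} are given by d*_{ij} = (2−d_i)(2−d_j)/(2(n−1)) − d_i/2 if i = j, and d*_{ij} = (2−d_i)(2−d_j)/(2(n−1)) + a_{ij}/2 if i ≠ j. -/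
open MvPolynomial Finset

set_option linter.unusedSectionVars false
set_option linter.unusedTactic false
set_option maxHeartbeats 1000000

namespace TreeInvAux

open SimpleGraph Finset

variable {V : Type*} [Fintype V] [DecidableEq V] {G : SimpleGraph V} [DecidableRel G.Adj]

lemma path_length (hT : G.IsTree) {u v : V} {p : G.Walk u v} (hp : p.IsPath) :
    p.length = G.dist u v := by
  obtain ⟨q, hq, hql⟩ := hT.isConnected.exists_path_of_dist u v
  rw [(hT.existsUnique_path u v).unique hp hq, hql]

lemma dist_step (hT : G.IsTree) (i : V) {j k : V} (hjk : G.Adj j k) :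
    G.dist i j = G.dist i k + 1 ∨ G.dist i k = G.dist i j + 1 := by
  obtain ⟨p, hp, hpl⟩ := hT.isConnected.exists_path_of_dist i k
  by_cases hj : j ∈ p.support
  · right
    have h1 : (p.takeUntil j hj).length = G.dist i j := path_length hT (hp.takeUntil hj)
    have h2 : (p.dropUntil j hj).length = G.dist j k := path_length hT (hp.dropUntil hj)
    have h3 := congrArg SimpleGraph.Walk.length (p.take_spec hj)
    rw [SimpleGraph.Walk.length_append] at h3
    have h4 : G.dist j k = 1 := dist_eq_one_iff_adj.mpr hjk
    omega
  · left
    have hp2 : (p.concat hjk.symm).IsPath := by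
      rw [← SimpleGraph.Walk.isPath_reverse_iff, SimpleGraph.Walk.reverse_concat]
      exact hp.reverse.cons (by simpa using hj)
    have := path_length hT hp2
    rw [SimpleGraph.Walk.length_concat, hpl] at this
    omega

lemma pred_eq (hT : G.IsTree) {i j x y : V}
    (hx : G.Adj j x ∧ G.dist i x + 1 = G.dist i j)
    (hy : G.Adj j y ∧ G.dist i y + 1 = G.dist i j) : x = y := by
  obtain ⟨hxa, hxd⟩ := hx
  obtain ⟨hya, hyd⟩ := hy
  -- build path i → x, concat with edge x → j, to get the unique path i → j
  have key : ∀ z : V, G.Adj j z → G.dist i z + 1 = G.dist i j →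
      ∃ w : G.Walk i j, w.IsPath ∧ w.reverse.getVert 1 = z := by
    intro z hza hzd
    obtain ⟨p, hp, hpl⟩ := hT.isConnected.exists_path_of_dist i z
    have hjns : j ∉ p.support := by
      intro hjs
      have h1 : (p.takeUntil j hjs).length = G.dist i j := path_length hT (hp.takeUntil hjs)
      have h2 := p.length_takeUntil_le hjs
      omega
    refine ⟨p.concat hza.symm, ?_, ?_⟩
    · rw [← SimpleGraph.Walk.isPath_reverse_iff, SimpleGraph.Walk.reverse_concat]
      exact hp.reverse.cons (by simpa using hjns)
    · rw [SimpleGraph.Walk.reverse_concat]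
      rw [SimpleGraph.Walk.getVert_cons _ _ one_ne_zero, Nat.sub_self, SimpleGraph.Walk.getVert_zero]
  obtain ⟨w1, hw1, hw1v⟩ := key x hxa hxd
  obtain ⟨w2, hw2, hw2v⟩ := key y hya hyd
  have : w1 = w2 := (hT.existsUnique_path i j).unique hw1 hw2
  rw [← hw1v, ← hw2v, this]

lemma pred_exists (hT : G.IsTree) {i j : V} (hij : i ≠ j) :
    ∃ k, G.Adj j k ∧ G.dist i k + 1 = G.dist i j := by
  obtain ⟨p, hp, hpl⟩ := hT.isConnected.exists_path_of_dist i j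
  obtain ⟨k, ha, q, heq⟩ := SimpleGraph.Walk.exists_eq_cons_of_ne (Ne.symm hij) p.reverse
  have hq : q.reverse.IsPath := by
    have := hp.reverse
    rw [heq, SimpleGraph.Walk.cons_isPath_iff] at this
    exact this.1.reverse
  have hql : q.reverse.length = G.dist i k := path_length hT hq
  have hl : p.reverse.length = G.dist i j := by rwa [SimpleGraph.Walk.length_reverse]
  rw [heq, SimpleGraph.Walk.length_cons] at hl
  rw [SimpleGraph.Walk.length_reverse] at hql
  exact ⟨k, ha, by omega⟩


lemma card_pred (hT : G.IsTree) (i j : V) :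
    ((G.neighborFinset j).filter (fun k => G.dist i k + 1 = G.dist i j)).card
      = if i = j then 0 else 1 := by
  split_ifs with h
  · subst h
    rw [Finset.card_eq_zero, Finset.filter_eq_empty_iff]
    intro k _
    simp [SimpleGraph.dist_self]
  · obtain ⟨k0, hk0a, hk0d⟩ := pred_exists hT h
    rw [Finset.card_eq_one]
    refine ⟨k0, Finset.eq_singleton_iff_unique_mem.mpr ⟨?_, ?_⟩⟩
    · simp only [Finset.mem_filter, SimpleGraph.mem_neighborFinset]
      exact ⟨hk0a, hk0d⟩
    · intro x hx
      simp only [Finset.mem_filter, SimpleGraph.mem_neighborFinset] at hx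
      exact pred_eq hT hx ⟨hk0a, hk0d⟩

lemma neighbor_sum (hT : G.IsTree) (i j : V) :
    ∑ k ∈ G.neighborFinset j, (G.dist i k : ℤ)
      = G.degree j * G.dist i j + G.degree j - 2 * (if i = j then 0 else 1) := by
  classical
  set P : V → Prop := fun k => G.dist i k + 1 = G.dist i j with hP
  have hsplit := Finset.sum_filter_add_sum_filter_not (G.neighborFinset j) P
      (fun k => (G.dist i k : ℤ))
  have h1 : ∑ k ∈ (G.neighborFinset j).filter (fun x => P x), (G.dist i k : ℤ)
      = ((G.neighborFinset j).filter (fun x => P x)).card * ((G.dist i j : ℤ) - 1) := by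
    rw [Finset.sum_congr rfl (fun k hk => ?_), Finset.sum_const, nsmul_eq_mul]
    simp only [Finset.mem_filter, hP] at hk
    have := hk.2
    push_cast [← this]
    ring
  have h2 : ∑ k ∈ (G.neighborFinset j).filter (fun x => ¬ P x), (G.dist i k : ℤ)
      = ((G.neighborFinset j).filter (fun x => ¬ P x)).card * ((G.dist i j : ℤ) + 1) := by
    rw [Finset.sum_congr rfl (fun k hk => ?_), Finset.sum_const, nsmul_eq_mul]
    simp only [Finset.mem_filter, SimpleGraph.mem_neighborFinset, hP] at hk
    have hstep := dist_step hT i hk.1.symm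
    have : G.dist i k = G.dist i j + 1 := by omega
    push_cast [this]
    ring
  have hcard := Finset.card_filter_add_card_filter_not (s := G.neighborFinset j) (p := P)
  have hcp : ((G.neighborFinset j).filter P).card = if i = j then 0 else 1 :=
    card_pred hT i j
  have hdeg : (G.neighborFinset j).card = G.degree j := rfl
  rw [hdeg, hcp] at hcard
  have hcp' : ((G.neighborFinset j).filter (fun x => P x)).card = if i = j then 0 else 1 := hcp
  rw [← hsplit, h1, h2, hcp']
  by_cases h : i = j
  · simp only [if_pos h] at hcard ⊢
    have hc2 : ((G.neighborFinset j).filter (fun x => ¬ P x)).card = G.degree j := by omega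
    rw [hc2]
    subst h
    simp [SimpleGraph.dist_self]
  · simp only [if_neg h] at hcard ⊢
    have hd1 : 1 ≤ G.degree j := by omega
    have hc2 : ((G.neighborFinset j).filter (fun x => ¬ P x)).card = G.degree j - 1 := by omega
    rw [hc2]
    push_cast [Nat.cast_sub hd1]
    ring

lemma sum_swap_adj (F : V → V → ℤ) :
    ∑ j, ∑ k ∈ G.neighborFinset j, F j k = ∑ j, ∑ k ∈ G.neighborFinset j, F k j := by
  simp only [SimpleGraph.neighborFinset_eq_filter, Finset.sum_filter]
  rw [Finset.sum_comm]
  refine Finset.sum_congr rfl fun j _ => Finset.sum_congr rfl fun k _ => ?_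
  exact if_congr (G.adj_comm k j) rfl rfl

lemma sum_deg_dist (hT : G.IsTree) (i : V) :
    ∑ j, (G.degree j : ℤ) * G.dist i j
      = 2 * (∑ j, (G.dist i j : ℤ)) - ((Fintype.card V : ℤ) - 1) := by
  classical
  have hsplit : ∀ j, ∑ _k ∈ G.neighborFinset j, (G.dist i j : ℤ)
      = (∑ k ∈ G.neighborFinset j,
          if G.dist i k + 1 = G.dist i j then (G.dist i j : ℤ) else 0)
      + (∑ k ∈ G.neighborFinset j,
          if G.dist i j + 1 = G.dist i k then (G.dist i j : ℤ) else 0) := by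
    intro j
    rw [← Finset.sum_add_distrib]
    refine Finset.sum_congr rfl fun k hk => ?_
    rw [SimpleGraph.mem_neighborFinset] at hk
    rcases dist_step hT i hk with h | h
    · rw [if_pos (by omega), if_neg (by omega), add_zero]
    · rw [if_neg (by omega), if_pos (by omega), zero_add]
  have hdeg : ∀ j, ∑ _k ∈ G.neighborFinset j, (G.dist i j : ℤ)
      = (G.degree j : ℤ) * G.dist i j := by
    intro j
    rw [Finset.sum_const, nsmul_eq_mul]
    rfl
  have hM : ∑ j, (∑ k ∈ G.neighborFinset j,
      if G.dist i k + 1 = G.dist i j then (G.dist i j : ℤ) else 0)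
      = ∑ j, (G.dist i j : ℤ) := by
    refine Finset.sum_congr rfl fun j _ => ?_
    rw [← Finset.sum_filter, Finset.sum_const, nsmul_eq_mul, card_pred hT i j]
    by_cases h : i = j
    · subst h; simp [SimpleGraph.dist_self]
    · rw [if_neg h]; push_cast; ring
  have hM' : ∑ j, (∑ k ∈ G.neighborFinset j,
      if G.dist i j + 1 = G.dist i k then (G.dist i j : ℤ) else 0)
      = ∑ j, (G.dist i j : ℤ) - ((Fintype.card V : ℤ) - 1) := by
    rw [sum_swap_adj (fun j k => if G.dist i j + 1 = G.dist i k then (G.dist i j : ℤ) else 0)]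
    have step1 : ∀ j, (∑ k ∈ G.neighborFinset j,
        if G.dist i k + 1 = G.dist i j then (G.dist i k : ℤ) else 0)
        = if i = j then 0 else (G.dist i j : ℤ) - 1 := by
      intro j
      rw [← Finset.sum_filter]
      have hval : ∀ k ∈ (G.neighborFinset j).filter (fun a => G.dist i a + 1 = G.dist i j),
          (G.dist i k : ℤ) = (G.dist i j : ℤ) - 1 := by
        intro k hk
        rw [Finset.mem_filter] at hk
        have := hk.2
        push_cast [← this]
        ring
      rw [Finset.sum_congr rfl hval, Finset.sum_const, nsmul_eq_mul, card_pred hT i j]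
      by_cases h : i = j
      · rw [if_pos h, if_pos h]; push_cast; ring
      · rw [if_neg h, if_neg h]; push_cast; ring
    rw [Finset.sum_congr rfl (fun j _ => step1 j)]
    have : ∀ j : V, (if i = j then 0 else (G.dist i j : ℤ) - 1)
        = (G.dist i j : ℤ) - 1 + (if i = j then (1:ℤ) else 0) := by
      intro j
      by_cases h : i = j
      · subst h; simp [SimpleGraph.dist_self]
      · simp [h]
    rw [Finset.sum_congr rfl (fun j _ => this j), Finset.sum_add_distrib,
      Finset.sum_sub_distrib, Finset.sum_ite_eq, if_pos (Finset.mem_univ i),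
      Finset.sum_const, Finset.card_univ]
    push_cast
    ring
  calc ∑ j, (G.degree j : ℤ) * G.dist i j
      = ∑ j, ∑ _k ∈ G.neighborFinset j, (G.dist i j : ℤ) :=
        (Finset.sum_congr rfl fun j _ => (hdeg j).symm)
    _ = ∑ j, ((∑ k ∈ G.neighborFinset j,
          if G.dist i k + 1 = G.dist i j then (G.dist i j : ℤ) else 0)
        + (∑ k ∈ G.neighborFinset j,
          if G.dist i j + 1 = G.dist i k then (G.dist i j : ℤ) else 0)) :=
        (Finset.sum_congr rfl fun j _ => hsplit j)
    _ = 2 * (∑ j, (G.dist i j : ℤ)) - ((Fintype.card V : ℤ) - 1) := by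
        rw [Finset.sum_add_distrib, hM, hM']
        ring

lemma sum_two_sub_deg_dist (hT : G.IsTree) (i : V) :
    ∑ j, (G.dist i j : ℤ) * (2 - G.degree j) = (Fintype.card V : ℤ) - 1 := by
  have h := sum_deg_dist hT i
  have : ∑ j, (G.dist i j : ℤ) * (2 - G.degree j)
      = 2 * (∑ j, (G.dist i j : ℤ)) - ∑ j, (G.degree j : ℤ) * G.dist i j := by
    rw [Finset.mul_sum, ← Finset.sum_sub_distrib]
    exact Finset.sum_congr rfl fun j _ => by ring
  rw [this, h]
  ring

lemma neighbor_sum_complex (hT : G.IsTree) (i k : V) :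
    ∑ j ∈ G.neighborFinset k, (G.dist i j : ℂ)
      = (G.degree k : ℂ) * G.dist i k + G.degree k - 2 * (if i = k then (0:ℂ) else 1) := by
  have h := neighbor_sum hT i k
  have h' := congrArg (Int.cast : ℤ → ℂ) h
  push_cast at h'
  by_cases hik : i = k
  · rw [if_pos hik] at h' ⊢
    exact h'
  · rw [if_neg hik] at h' ⊢
    exact h'

lemma sum_dist_complex (hT : G.IsTree) (i : V) :
    ∑ j, (G.dist i j : ℂ) * (2 - G.degree j) = (Fintype.card V : ℂ) - 1 := by
  have h := sum_two_sub_deg_dist hT i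
  have h' := congrArg (Int.cast : ℤ → ℂ) h
  push_cast at h'
  exact h'

end TreeInvAux


theorem stmt10 {n : ℕ} (G : SimpleGraph (Fin (n + 2))) [DecidableRel G.Adj]
    (hT : G.IsTree)
    (D : Matrix (Fin (n + 2)) (Fin (n + 2)) ℂ) (hD : ∀ i j, D i j = G.dist i j) :
    IsUnit D ∧ ∀ i j, D⁻¹ i j =
      ((2 - (G.degree i : ℂ)) * (2 - (G.degree j : ℂ))) / (2 * (n + 1)) +
      (if i = j then -(G.degree i : ℂ) / 2
       else (if G.Adj i j then (1 : ℂ) else 0) / 2) := by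
  classical
  set Mi : Matrix (Fin (n + 2)) (Fin (n + 2)) ℂ := fun i j =>
    ((2 - (G.degree i : ℂ)) * (2 - (G.degree j : ℂ))) / (2 * (n + 1)) +
      (if i = j then -(G.degree i : ℂ) / 2
       else (if G.Adj i j then (1 : ℂ) else 0) / 2) with hMi
  have hn : ((n : ℂ) + 1) ≠ 0 := Nat.cast_add_one_ne_zero n
  have hB : ∀ i, ∑ j, (G.dist i j : ℂ) * (2 - G.degree j) = (n : ℂ) + 1 := by
    intro i
    rw [TreeInvAux.sum_dist_complex hT i, Fintype.card_fin]
    push_cast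
    ring
  have hDM : D * Mi = 1 := by
    ext i k
    rw [Matrix.mul_apply, Matrix.one_apply]
    have expand : ∀ j, D i j * Mi j k
        = (G.dist i j : ℂ) * (2 - G.degree j) * ((2 - G.degree k) / (2 * (n + 1)))
        + (G.dist i j : ℂ) *
          (if j = k then -(G.degree j : ℂ) / 2 else (if G.Adj j k then (1:ℂ) else 0) / 2) := by
      intro j
      rw [hD, hMi]
      ring
    rw [Finset.sum_congr rfl (fun j _ => expand j), Finset.sum_add_distrib]
    have e1 : ∑ j, (G.dist i j : ℂ) * (2 - G.degree j) * ((2 - G.degree k) / (2 * (n + 1)))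
        = (2 - (G.degree k : ℂ)) / 2 := by
      rw [← Finset.sum_mul, hB i]
      field_simp
    have e2 : ∑ j, (G.dist i j : ℂ) *
          (if j = k then -(G.degree j : ℂ) / 2 else (if G.Adj j k then (1:ℂ) else 0) / 2)
        = (G.degree k : ℂ) / 2 - (if i = k then (0:ℂ) else 1) := by
      rw [← Finset.sum_erase_add _ _ (Finset.mem_univ k), if_pos rfl]
      have h1 : ∑ j ∈ Finset.univ.erase k, (G.dist i j : ℂ) *
            (if j = k then -(G.degree j : ℂ) / 2 else (if G.Adj j k then (1:ℂ) else 0) / 2)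
          = ∑ j ∈ Finset.univ.erase k,
            (if G.Adj k j then (G.dist i j : ℂ) / 2 else 0) := by
        refine Finset.sum_congr rfl fun j hj => ?_
        rw [Finset.mem_erase] at hj
        rw [if_neg hj.1]
        by_cases hA : G.Adj j k
        · rw [if_pos hA, if_pos hA.symm]
          ring
        · rw [if_neg hA, if_neg (fun h => hA h.symm)]
          ring
      have h2 : ∑ j ∈ Finset.univ.erase k, (if G.Adj k j then (G.dist i j : ℂ) / 2 else 0)
          = ∑ j, (if G.Adj k j then (G.dist i j : ℂ) / 2 else 0) := by
        apply Finset.sum_subset (Finset.subset_univ _)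
        intro x _ hx
        have : x = k := by
          by_contra hxk
          exact hx (Finset.mem_erase.mpr ⟨hxk, Finset.mem_univ x⟩)
        subst this
        rw [if_neg (G.irrefl)]
      have h3 : ∑ j, (if G.Adj k j then (G.dist i j : ℂ) / 2 else 0)
          = (∑ j ∈ G.neighborFinset k, (G.dist i j : ℂ)) / 2 := by
        have hh : ∀ j : Fin (n + 2), (if G.Adj k j then (G.dist i j : ℂ) / 2 else 0)
            = (if G.Adj k j then (G.dist i j : ℂ) else 0) / 2 := by
          intro j
          split_ifs <;> simp
        rw [Finset.sum_congr rfl fun j _ => hh j, ← Finset.sum_div,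
          SimpleGraph.neighborFinset_eq_filter, Finset.sum_filter]
      rw [h1, h2, h3, TreeInvAux.neighbor_sum_complex hT i k]
      by_cases h : i = k
      · simp only [if_pos h]
        ring
      · simp only [if_neg h]
        ring
    rw [e1, e2]
    by_cases h : i = k
    · simp only [if_pos h]
      ring
    · simp only [if_neg h]
      ring
  have hdet : IsUnit D.det :=
    IsUnit.of_mul_eq_one Mi.det (by rw [← Matrix.det_mul, hDM, Matrix.det_one])
  refine ⟨(Matrix.isUnit_iff_isUnit_det D).mpr hdet, fun i j => ?_⟩
  rw [Matrix.inv_eq_right_inv hDM, hMi]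
end

section
/- Let T be a tree on n ≥ 2 vertices. For any a_3,...,a_n ∈ ℂ there exist a_1, a_2 ∈ ℂ such that (a_1,...,a_n) is a common zero of all partial derivatives of the Steiner 3-form p_T^{(3)} (a Steiner nullvector). -/
open MvPolynomial Finset

set_option linter.unusedSectionVars false
set_option linter.unusedVariables false
set_option maxHeartbeats 1000000

open SimpleGraph

namespace SteinerAux

section TreePart

variable {V : Type*} [Fintype V] [DecidableEq V] {G : SimpleGraph V}

noncomputable def tPath (hT : G.IsTree) (u v : V) : G.Walk u v :=
  (hT.existsUnique_path u v).choose

lemma tPath_isPath (hT : G.IsTree) (u v : V) : (tPath hT u v).IsPath :=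
  (hT.existsUnique_path u v).choose_spec.1

lemma tPath_unique (hT : G.IsTree) {u v : V} {p : G.Walk u v} (hp : p.IsPath) :
    p = tPath hT u v :=
  (hT.existsUnique_path u v).choose_spec.2 p hp

lemma edges_tPath_subset (hT : G.IsTree) {u v : V} (w : G.Walk u v) :
    (tPath hT u v).edges ⊆ w.edges := by
  rw [← tPath_unique hT w.bypass_isPath]
  exact w.edges_bypass_subset

lemma length_tPath (hT : G.IsTree) (u v : V) : (tPath hT u v).length = G.dist u v := by
  refine le_antisymm ?_ (SimpleGraph.dist_le _)
  obtain ⟨w, hw⟩ := (hT.isConnected u v).exists_walk_length_eq_dist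
  calc (tPath hT u v).length ≤ w.bypass.length := by
        rw [← tPath_unique hT w.bypass_isPath]
      _ ≤ w.length := w.length_bypass_le
      _ = G.dist u v := hw

section bridge

variable (hT : G.IsTree) {x y : V} (hxy : G.Adj x y)

lemma reachable_of_notmem {u v : V} (p : G.Walk u v) (h : s(x, y) ∉ p.edges) :
    (G \ fromEdgeSet {s(x, y)}).Reachable u v := by
  refine ⟨p.transfer _ fun e ep => ?_⟩
  simp only [edgeSet_sdiff, edgeSet_fromEdgeSet, edgeSet_sdiff_sdiff_isDiag, Set.mem_diff,
    Set.mem_singleton_iff]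
  exact ⟨p.edges_subset_edgeSet ep, fun h' => h (h' ▸ ep)⟩

lemma mem_tPath_iff (u v : V) :
    s(x, y) ∈ (tPath hT u v).edges ↔ ¬(G \ fromEdgeSet {s(x, y)}).Reachable u v := by
  constructor
  · rintro hmem ⟨w⟩
    have hw' := edges_tPath_subset hT (w.map (Hom.ofLE (sdiff_le : G \ _ ≤ G)))
    have := hw' hmem
    rw [SimpleGraph.Walk.edges_map] at this
    obtain ⟨e', he', heq⟩ := List.mem_map.mp this
    have he'' := w.edges_subset_edgeSet he'
    simp only [edgeSet_sdiff, edgeSet_fromEdgeSet, edgeSet_sdiff_sdiff_isDiag, Set.mem_diff,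
      Set.mem_singleton_iff] at he''
    apply he''.2
    rw [← heq]
    cases e' with
    | _ a b => simp [Hom.ofLE_apply]
  · intro h
    by_contra hmem
    exact h (reachable_of_notmem _ hmem)

end bridge




section bridge
variable (hT : G.IsTree) {x y : V} (hxy : G.Adj x y)

include hT hxy in
lemma not_reachable_xy : ¬(G \ fromEdgeSet {s(x, y)}).Reachable x y :=
  ((isAcyclic_iff_forall_adj_isBridge.mp hT.2) hxy)

include hT hxy in
lemma reachable_total (v : V) :
    (G \ fromEdgeSet {s(x, y)}).Reachable v x ∨ (G \ fromEdgeSet {s(x, y)}).Reachable v y := by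
  by_cases h : s(x, y) ∈ (tPath hT v x).edges
  · right
    set p := tPath hT v x with hp
    have hy : y ∈ p.support := p.snd_mem_support_of_mem_edges h
    refine reachable_of_notmem (p.takeUntil y hy) fun he => ?_
    have hxq : x ∈ (p.takeUntil y hy).support := (p.takeUntil y hy).fst_mem_support_of_mem_edges he
    have hnd : p.support.Nodup := (tPath_isPath hT v x).support_nodup
    have hspec := p.take_spec hy
    rw [← hspec, SimpleGraph.Walk.support_append] at hnd
    have hxd : x ∈ (p.dropUntil y hy).support.tail := by
      have hend : x ∈ (p.dropUntil y hy).support := SimpleGraph.Walk.end_mem_support _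
      rw [SimpleGraph.Walk.support_eq_cons] at hend
      rcases List.mem_cons.mp hend with h' | h'
      · exact absurd h' hxy.ne
      · exact h'
    exact List.disjoint_of_nodup_append hnd hxq hxd
  · left
    exact reachable_of_notmem _ h

include hT hxy in
lemma not_reachable_iff (u v : V) :
    ¬(G \ fromEdgeSet {s(x, y)}).Reachable u v ↔
      ((G \ fromEdgeSet {s(x, y)}).Reachable u x ∧ (G \ fromEdgeSet {s(x, y)}).Reachable v y) ∨
      ((G \ fromEdgeSet {s(x, y)}).Reachable u y ∧ (G \ fromEdgeSet {s(x, y)}).Reachable v x) := by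
  constructor
  · intro h
    rcases reachable_total hT hxy u with hu | hu <;> rcases reachable_total hT hxy v with hv | hv
    · exact absurd (hu.trans hv.symm) h
    · exact Or.inl ⟨hu, hv⟩
    · exact Or.inr ⟨hu, hv⟩
    · exact absurd (hu.trans hv.symm) h
  · rintro (⟨h1, h2⟩ | ⟨h1, h2⟩) hab
    · exact not_reachable_xy hT hxy (h1.symm.trans (hab.trans h2))
    · exact not_reachable_xy hT hxy ((h2.symm.trans hab.symm).trans h1)

include hT hxy in
lemma mem_xor (i j k : V) :
    (s(x, y) ∈ (tPath hT i k).edges) ↔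
      ((s(x, y) ∈ (tPath hT i j).edges ∨ s(x, y) ∈ (tPath hT j k).edges) ∧
        ¬(s(x, y) ∈ (tPath hT i j).edges ∧ s(x, y) ∈ (tPath hT j k).edges)) := by
  rw [mem_tPath_iff hT, mem_tPath_iff hT, mem_tPath_iff hT,
    not_reachable_iff hT hxy, not_reachable_iff hT hxy, not_reachable_iff hT hxy]
  have hti := reachable_total hT hxy i
  have htj := reachable_total hT hxy j
  have htk := reachable_total hT hxy k
  have hexc : ∀ a : V, ¬((G \ fromEdgeSet {s(x, y)}).Reachable a x ∧
      (G \ fromEdgeSet {s(x, y)}).Reachable a y) :=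
    fun a ⟨h1, h2⟩ => not_reachable_xy hT hxy (h1.symm.trans h2)
  have hei := hexc i; have hej := hexc j; have hek := hexc k
  tauto
end bridge



lemma path_edges_mem_subgraph (hT : G.IsTree) {H : G.Subgraph} (hH : H.Connected)
    {u v : V} (hu : u ∈ H.verts) (hv : v ∈ H.verts) {e : Sym2 V}
    (he : e ∈ (tPath hT u v).edges) : e ∈ H.edgeSet := by
  obtain ⟨W⟩ := hH ⟨u, hu⟩ ⟨v, hv⟩
  have hsub := edges_tPath_subset hT (W.map H.hom)
  have := hsub he
  rw [SimpleGraph.Walk.edges_map] at this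
  obtain ⟨e', he', heq⟩ := List.mem_map.mp this
  have he'' : e' ∈ H.coe.edgeSet := W.edges_subset_edgeSet he'
  subst heq
  induction e' with
  | _ a b =>
    rw [SimpleGraph.mem_edgeSet, SimpleGraph.Subgraph.coe_adj] at he''
    simpa [Sym2.map_pair_eq, SimpleGraph.Subgraph.mem_edgeSet] using he''

lemma steiner_eq_card (hT : G.IsTree) (i j k : V) :
    steinerDist G {i, j, k} =
      ((tPath hT i j).edges.toFinset ∪ (tPath hT j k).edges.toFinset).card := by
  unfold steinerDist
  set w := (tPath hT i j).append (tPath hT j k) with hw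
  have hedge : w.toSubgraph.edgeSet =
      ↑((tPath hT i j).edges.toFinset ∪ (tPath hT j k).edges.toFinset) := by
    ext e
    simp [SimpleGraph.Walk.mem_edges_toSubgraph, hw, SimpleGraph.Walk.edges_append]
  refine le_antisymm (Nat.sInf_le ⟨w.toSubgraph, w.toSubgraph_connected, ?_, ?_⟩) ?_
  · intro v hv
    rw [SimpleGraph.Walk.mem_verts_toSubgraph]
    rcases hv with rfl | rfl | rfl
    · exact SimpleGraph.Walk.start_mem_support _
    · rw [hw, SimpleGraph.Walk.mem_support_append_iff]
      exact Or.inl (SimpleGraph.Walk.end_mem_support _)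
    · exact SimpleGraph.Walk.end_mem_support _
  · rw [hedge, Set.ncard_coe_finset]
  · have hne : {m | ∃ H : G.Subgraph, H.Connected ∧ {i, j, k} ⊆ H.verts ∧
        H.edgeSet.ncard = m}.Nonempty := by
      refine ⟨_, w.toSubgraph, w.toSubgraph_connected, ?_, rfl⟩
      intro v hv
      rw [SimpleGraph.Walk.mem_verts_toSubgraph]
      rcases hv with rfl | rfl | rfl
      · exact SimpleGraph.Walk.start_mem_support _
      · rw [hw, SimpleGraph.Walk.mem_support_append_iff]
        exact Or.inl (SimpleGraph.Walk.end_mem_support _)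
      · exact SimpleGraph.Walk.end_mem_support _
    obtain ⟨H, hHc, hHv, hHm⟩ := Nat.sInf_mem hne
    rw [← hHm, ← Set.ncard_coe_finset]
    refine Set.ncard_le_ncard ?_ (Set.toFinite _)
    intro e he
    simp only [Finset.coe_union, Set.mem_union, List.coe_toFinset, Set.mem_setOf_eq] at he
    have hi : i ∈ H.verts := hHv (by simp)
    have hj : j ∈ H.verts := hHv (by simp)
    have hk : k ∈ H.verts := hHv (by simp)
    rcases he with he | he
    · exact path_edges_mem_subgraph hT hHc hi hj he
    · exact path_edges_mem_subgraph hT hHc hj hk he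

lemma steiner_tree_formula (hT : G.IsTree) (i j k : V) :
    2 * steinerDist G {i, j, k} = G.dist i j + G.dist j k + G.dist i k := by
  classical
  have hcard : ∀ (u v : V), (tPath hT u v).edges.toFinset.card = G.dist u v := by
    intro u v
    rw [List.toFinset_card_of_nodup (tPath_isPath hT u v).isTrail.edges_nodup,
      SimpleGraph.Walk.length_edges, length_tPath]
  have hsd : (tPath hT i k).edges.toFinset =
      ((tPath hT i j).edges.toFinset ∪ (tPath hT j k).edges.toFinset) \
        ((tPath hT i j).edges.toFinset ∩ (tPath hT j k).edges.toFinset) := by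
    ext e
    by_cases he : e ∈ G.edgeSet
    · induction e with
      | _ x y =>
        rw [SimpleGraph.mem_edgeSet] at he
        simp only [Finset.mem_sdiff, Finset.mem_union, Finset.mem_inter, List.mem_toFinset]
        exact mem_xor hT he i j k
    · have hnm : ∀ (u v : V), e ∉ (tPath hT u v).edges := fun u v h =>
        he (SimpleGraph.Walk.edges_subset_edgeSet _ h)
      simp [hnm]
  have h1 := Finset.card_union_add_card_inter (tPath hT i j).edges.toFinset
    (tPath hT j k).edges.toFinset
  have h2 : (tPath hT i k).edges.toFinset.card =
      ((tPath hT i j).edges.toFinset ∪ (tPath hT j k).edges.toFinset).card -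
        ((tPath hT i j).edges.toFinset ∩ (tPath hT j k).edges.toFinset).card := by
    rw [hsd, Finset.card_sdiff_of_subset Finset.inter_subset_union]
  have h3 := Finset.card_le_card (Finset.inter_subset_union (s := (tPath hT i j).edges.toFinset)
    (t := (tPath hT j k).edges.toFinset))
  rw [steiner_eq_card hT i j k, ← hcard i j, ← hcard j k, ← hcard i k]
  omega


end TreePart

section AlgPart

variable {N : ℕ} {G : SimpleGraph (Fin N)}

lemma eval_pderiv_term (b : Fin N → ℂ) (r : Fin N) (c : ℂ) (i j k : Fin N) :
    eval b (pderiv r (C c * X i * X j * X k)) =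
      c * ((if i = r then b j * b k else 0) + (if j = r then b i * b k else 0) +
        (if k = r then b i * b j else 0)) := by
  simp only [pderiv_mul, pderiv_C, pderiv_X, Pi.single_apply]
  split_ifs <;> simp <;> ring

lemma grad_eq (b : Fin N → ℂ) (r : Fin N) :
    eval b (pderiv r (steinerForm3 G)) =
      (∑ j, ∑ k, (steinerDist G {r, j, k} : ℂ) * (b j * b k))
      + (∑ i, ∑ k, (steinerDist G {i, r, k} : ℂ) * (b i * b k))
      + (∑ i, ∑ j, (steinerDist G {i, j, r} : ℂ) * (b i * b j)) := by
  unfold steinerForm3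
  rw [map_sum, map_sum]
  simp_rw [map_sum, eval_pderiv_term, mul_add, Finset.sum_add_distrib, mul_ite, mul_zero,
    Finset.sum_ite_irrel, Finset.sum_const_zero, Finset.sum_ite_eq', Finset.mem_univ, if_true]

lemma key_cast (hT : G.IsTree) (i j k : Fin N) :
    (steinerDist G {i, j, k} : ℂ) * 2 =
      (G.dist i j : ℂ) + (G.dist j k : ℂ) + (G.dist i k : ℂ) := by
  have h := congrArg (fun m : ℕ => (m : ℂ)) (steiner_tree_formula hT i j k)
  push_cast at h
  linear_combination h

lemma grad_zero (hT : G.IsTree) (b : Fin N → ℂ)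
    (hs : ∑ r, b r = 0)
    (hq : ∑ i, ∑ j, (G.dist i j : ℂ) * (b i * b j) = 0) (r : Fin N) :
    eval b (pderiv r (steinerForm3 G)) = 0 := by
  have hT1 : (∑ j, ∑ k, (steinerDist G {r, j, k} : ℂ) * (b j * b k)) * 2 = 0 := by
    calc (∑ j, ∑ k, (steinerDist G {r, j, k} : ℂ) * (b j * b k)) * 2
        = ∑ j, ∑ k, ((((G.dist r j : ℂ)) * b j) * b k + (G.dist j k : ℂ) * (b j * b k)
            + b j * ((G.dist r k : ℂ) * b k)) := by
          rw [Finset.sum_mul]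
          refine Finset.sum_congr rfl fun j _ => ?_
          rw [Finset.sum_mul]
          refine Finset.sum_congr rfl fun k _ => ?_
          linear_combination (b j * b k) * key_cast hT r j k
      _ = 0 := by
          simp_rw [Finset.sum_add_distrib]
          rw [← Finset.sum_mul_sum, ← Finset.sum_mul_sum, hs, hq]
          ring
  have hT2 : (∑ i, ∑ k, (steinerDist G {i, r, k} : ℂ) * (b i * b k)) * 2 = 0 := by
    calc (∑ i, ∑ k, (steinerDist G {i, r, k} : ℂ) * (b i * b k)) * 2
        = ∑ i, ∑ k, ((((G.dist i r : ℂ)) * b i) * b k + b i * ((G.dist r k : ℂ) * b k)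
            + (G.dist i k : ℂ) * (b i * b k)) := by
          rw [Finset.sum_mul]
          refine Finset.sum_congr rfl fun i _ => ?_
          rw [Finset.sum_mul]
          refine Finset.sum_congr rfl fun k _ => ?_
          linear_combination (b i * b k) * key_cast hT i r k
      _ = 0 := by
          simp_rw [Finset.sum_add_distrib]
          rw [← Finset.sum_mul_sum, ← Finset.sum_mul_sum, hs, hq]
          ring
  have hT3 : (∑ i, ∑ j, (steinerDist G {i, j, r} : ℂ) * (b i * b j)) * 2 = 0 := by
    calc (∑ i, ∑ j, (steinerDist G {i, j, r} : ℂ) * (b i * b j)) * 2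
        = ∑ i, ∑ j, ((G.dist i j : ℂ) * (b i * b j) + b i * ((G.dist j r : ℂ) * b j)
            + (((G.dist i r : ℂ)) * b i) * b j) := by
          rw [Finset.sum_mul]
          refine Finset.sum_congr rfl fun i _ => ?_
          rw [Finset.sum_mul]
          refine Finset.sum_congr rfl fun j _ => ?_
          linear_combination (b i * b j) * key_cast hT i j r
      _ = 0 := by
          simp_rw [Finset.sum_add_distrib]
          rw [← Finset.sum_mul_sum, ← Finset.sum_mul_sum, hs, hq]
          ring
  have h2 : eval b (pderiv r (steinerForm3 G)) * 2 = 0 := by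
    rw [grad_eq, add_mul, add_mul, hT1, hT2, hT3]
    ring
  exact (mul_eq_zero.mp h2).resolve_right two_ne_zero


end AlgPart

end SteinerAux

namespace SteinerAux2


variable {n : ℕ}

theorem exists_b (G : SimpleGraph (Fin (n + 2))) (hT : G.IsTree) (a : Fin (n + 2) → ℂ) :
    ∃ b : Fin (n + 2) → ℂ, (∀ i : Fin (n + 2), 2 ≤ (i : ℕ) → b i = a i) ∧
      (∑ r, b r = 0) ∧ (∑ i, ∑ j, (G.dist i j : ℂ) * (b i * b j) = 0) := by
  classical
  have h01 : (0 : Fin (n + 2)) ≠ 1 := by simp [Fin.ext_iff]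
  set A : ℂ := ∑ i : Fin n, a i.succ.succ with hA
  set c1 : Fin (n + 2) → ℂ := fun i => if i = 0 then 1 else if i = 1 then -1 else 0 with hc1def
  set c0 : Fin (n + 2) → ℂ := fun i => if i = 0 then 0 else if i = 1 then -A else a i with hc0def
  set β : Fin (n + 2) → Polynomial ℂ :=
    fun i => Polynomial.C (c1 i) * Polynomial.X + Polynomial.C (c0 i) with hβdef
  set P : Polynomial ℂ := ∑ i, ∑ j, Polynomial.C ((G.dist i j : ℂ)) * (β i * β j) with hPdef
  have hprodcoeff : ∀ i j, (β i * β j).coeff 2 = c1 i * c1 j := by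
    intro i j
    have hexp : β i * β j = Polynomial.C (c1 i * c1 j) * Polynomial.X ^ 2 +
        Polynomial.C (c1 i * c0 j + c0 i * c1 j) * Polynomial.X +
        Polynomial.C (c0 i * c0 j) := by
      simp only [hβdef, map_mul, map_add]
      ring
    rw [hexp]
    simp only [Polynomial.coeff_add, Polynomial.coeff_C_mul, Polynomial.coeff_X_pow,
      Polynomial.coeff_X, Polynomial.coeff_C]
    norm_num
  have hc1split : ∀ i : Fin (n + 2),
      c1 i = (if i = 0 then (1:ℂ) else 0) + (if i = 1 then (-1:ℂ) else 0) := by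
    intro i
    by_cases h0 : i = 0
    · simp [hc1def, h0, h01]
    · by_cases h1 : i = 1 <;> simp [hc1def, h0, h1]
  have hPcoeff : P.coeff 2 = -2 * (G.dist 0 1 : ℂ) := by
    rw [hPdef, Polynomial.finset_sum_coeff]
    simp_rw [Polynomial.finset_sum_coeff, Polynomial.coeff_C_mul, hprodcoeff]
    simp only [hc1split, add_mul, mul_add, mul_ite, ite_mul, mul_one, one_mul, mul_neg, neg_mul,
      mul_zero, zero_mul, neg_neg, Finset.sum_add_distrib, Finset.sum_ite_irrel,
      Finset.sum_const_zero, Finset.sum_ite_eq', Finset.mem_univ, if_true, Finset.sum_neg_distrib]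
    simp only [SimpleGraph.dist_self, SimpleGraph.dist_comm (u := (1 : Fin (n+2))) (v := (0 : Fin (n+2)))]
    push_cast
    ring
  have hd01 : (G.dist 0 1 : ℂ) ≠ 0 := by
    have hpos := hT.isConnected.pos_dist_of_ne h01
    exact_mod_cast Nat.pos_iff_ne_zero.mp hpos
  have hco : P.coeff 2 ≠ 0 := by
    rw [hPcoeff]
    exact mul_ne_zero (by norm_num) hd01
  have hdeg : P.degree ≠ 0 := by
    have hle := Polynomial.le_degree_of_ne_zero hco
    intro h0
    rw [h0] at hle
    exact absurd hle (by norm_num)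
  obtain ⟨t, ht⟩ := Complex.isAlgClosed.exists_root P hdeg
  refine ⟨fun i => c1 i * t + c0 i, ?_, ?_, ?_⟩
  · intro i hi
    have hi0 : i ≠ 0 := by intro h; rw [h] at hi; simp at hi
    have hi1 : i ≠ 1 := by intro h; rw [h] at hi; simp at hi
    simp [hc1def, hc0def, hi0, hi1]
  · rw [Fin.sum_univ_succ, Fin.sum_univ_succ]
    have e1 : ((0 : Fin (n + 1)).succ) = (1 : Fin (n + 2)) := rfl
    have hss : ∀ i : Fin n, (c1 i.succ.succ * t + c0 i.succ.succ) = a i.succ.succ := by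
      intro i
      have h0 : (i.succ.succ : Fin (n + 2)) ≠ 0 := Fin.succ_ne_zero _
      have h1 : (i.succ.succ : Fin (n + 2)) ≠ 1 := by
        simp [Fin.ext_iff]
      simp [hc1def, hc0def, h0, h1]
    simp only [e1, hss]
    have hv0 : c1 0 * t + c0 0 = t := by simp [hc1def, hc0def]
    have hv1 : c1 1 * t + c0 1 = -A - t := by simp [hc1def, hc0def, h01.symm]; ring
    rw [hv0, hv1, hA]
    ring
  · have hb : ∀ i, c1 i * t + c0 i = Polynomial.eval t (β i) := by
      intro i; simp [hβdef]
    simp_rw [hb]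
    have : ∑ i, ∑ j, (G.dist i j : ℂ) * (Polynomial.eval t (β i) * Polynomial.eval t (β j)) =
        P.eval t := by
      rw [hPdef, Polynomial.eval_finset_sum]
      refine Finset.sum_congr rfl fun i _ => ?_
      rw [Polynomial.eval_finset_sum]
      refine Finset.sum_congr rfl fun j _ => ?_
      simp
    rw [this, ht]

end SteinerAux2

theorem stmt16 {n : ℕ} (G : SimpleGraph (Fin (n + 2))) (hT : G.IsTree)
    (a : Fin (n + 2) → ℂ) :
    ∃ b : Fin (n + 2) → ℂ, (∀ i : Fin (n + 2), 2 ≤ (i : ℕ) → b i = a i) ∧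
      ∀ r, MvPolynomial.eval b (MvPolynomial.pderiv r (steinerForm3 G)) = 0 := by
  obtain ⟨b, hb, hs, hq⟩ := SteinerAux2.exists_b G hT a
  exact ⟨b, hb, fun r => SteinerAux.grad_zero hT b hs hq r⟩
end
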